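/- arXiv:1110.4068 — 4 statements merged into one kernel-verified Lean document; each statement's English description precedes it below -/
import Mathlib

section
/- There exists a partial order ≤_P on ℕ whose coded set is co-c.e. and which is not isomorphic to any partial order on ℕ whose coded set is c.e. -/
namespace CEOrders

/-- The coded set of a binary relation on ℕ, via the pairing function `Nat.pair`. -/
def codedSet (R : ℕ → ℕ → Prop) : Set ℕ := {n | R n.unpair.1 n.unpair.2}

/-- A set of naturals is c.e. (computably enumerable). -/
def SetCE (A : Set ℕ) : Prop := REPred (· ∈ A)

/-- A set of naturals is co-c.e. -/
def SetCoCE (A : Set ℕ) : Prop := REPred (· ∉ A)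

/-- A set of naturals is computable. -/
def SetComputable (A : Set ℕ) : Prop := ComputablePred (· ∈ A)

/-- A partial order on ℕ: reflexive, antisymmetric, transitive. -/
def PartialOrderRel (R : ℕ → ℕ → Prop) : Prop :=
  (∀ a, R a a) ∧ (∀ a b, R a b → R b a → a = b) ∧ (∀ a b c, R a b → R b c → R a c)

/-- A preorder on ℕ: reflexive, transitive. -/
def PreorderRel (R : ℕ → ℕ → Prop) : Prop :=
  (∀ a, R a a) ∧ (∀ a b c, R a b → R b c → R a c)

/-- A (simple, undirected) graph on ℕ: irreflexive, symmetric. -/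
def GraphRel (R : ℕ → ℕ → Prop) : Prop :=
  (∀ a, ¬ R a a) ∧ (∀ a b, R a b → R b a)

/-- Isomorphism of binary relations on ℕ. -/
def Isomorphic (R Q : ℕ → ℕ → Prop) : Prop :=
  ∃ f : ℕ → ℕ, Function.Bijective f ∧ ∀ a b, R a b ↔ Q (f a) (f b)

/-- A chain for a relation: any two elements comparable. -/
def ChainFor (R : ℕ → ℕ → Prop) (C : Set ℕ) : Prop :=
  ∀ a ∈ C, ∀ b ∈ C, R a b ∨ R b a

/-- An antichain for a relation: any two distinct elements incomparable. -/
def AntichainFor (R : ℕ → ℕ → Prop) (C : Set ℕ) : Prop :=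
  ∀ a ∈ C, ∀ b ∈ C, a ≠ b → ¬ R a b ∧ ¬ R b a

/-- Partial functions computable relative to an oracle `g`. -/
inductive RecursiveIn (g : ℕ →. ℕ) : (ℕ →. ℕ) → Prop
  | zero : RecursiveIn g (pure 0)
  | succ : RecursiveIn g Nat.succ
  | left : RecursiveIn g ↑fun n : ℕ => n.unpair.1
  | right : RecursiveIn g ↑fun n : ℕ => n.unpair.2
  | oracle : RecursiveIn g g
  | pair {f h} : RecursiveIn g f → RecursiveIn g h →
      RecursiveIn g fun n => Nat.pair <$> f n <*> h n
  | comp {f h} : RecursiveIn g f → RecursiveIn g h →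
      RecursiveIn g fun n => h n >>= f
  | prec {f h} : RecursiveIn g f → RecursiveIn g h →
      RecursiveIn g (Nat.unpaired fun a n =>
        n.rec (f a) fun y IH => do let i ← IH; h (Nat.pair a (Nat.pair y i)))
  | rfind {f} : RecursiveIn g f →
      RecursiveIn g fun a => Nat.rfind fun n => (fun m => m = 0) <$> f (Nat.pair a n)

open Classical in
/-- The characteristic (partial) function of a set of naturals. -/
noncomputable def charFun (A : Set ℕ) : ℕ →. ℕ :=
  fun n => Part.some (if n ∈ A then 1 else 0)

/-- Turing reducibility between sets of naturals. -/
def TuringLE (A B : Set ℕ) : Prop := RecursiveIn (charFun B) (charFun A)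

/-- Turing equivalence between sets of naturals. -/
def TuringEquiv (A B : Set ℕ) : Prop := TuringLE A B ∧ TuringLE B A

/-- The halting set ∅'. -/
def HaltingSet : Set ℕ :=
  {n | ((Denumerable.ofNat Nat.Partrec.Code n).eval n).Dom}

/-- A relation on ℕ is automorphically nontrivial. -/
def AutNontrivial (R : ℕ → ℕ → Prop) : Prop :=
  ¬ ∃ F : Finset ℕ, ∀ f : ℕ → ℕ, Function.Bijective f → (∀ x ∈ F, f x = x) →
      ∀ a b, R a b ↔ R (f a) (f b)

/-! ### Auxiliary development for `exists_coCE_partialOrder_not_iso_CE` -/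

open Nat.Partrec (Code)
open Nat.Partrec.Code

/-- The crown relation within a block with parameter `k`: lower element `i < k` sits
below the upper elements coded as `k + i` and `k + ((i+1) % k)`. -/
def crownRel (k i j : ℕ) : Prop := i < k ∧ (j = k + i ∨ j = k + ((i + 1) % k))

instance (k i j : ℕ) : Decidable (crownRel k i j) := by unfold crownRel; infer_instance

/-- The co-c.e. partial order: within block `n` (elements `Nat.pair n j`), a crown of
parameter `n+3` that survives iff `n ∉ HaltingSet`. -/
def Pord (x y : ℕ) : Prop :=
  x = y ∨ (x.unpair.1 = y.unpair.1 ∧ crownRel (x.unpair.1 + 3) x.unpair.2 y.unpair.2 ∧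
    x.unpair.1 ∉ HaltingSet)

/-- A (weak) embedding of the `K`-crown into the relation `R`. -/
def HasCrown (R : ℕ → ℕ → Prop) (K : ℕ) : Prop :=
  ∃ a b : ℕ → ℕ,
    (∀ i < K, ∀ j < K, i ≠ j → a i ≠ a j) ∧
    (∀ i < K, ∀ j < K, i ≠ j → b i ≠ b j) ∧
    (∀ i < K, ∀ j < K, a i ≠ b j) ∧
    (∀ i < K, R (a i) (b i) ∧ R (a i) (b ((i + 1) % K)))

theorem pord_partialOrder : PartialOrderRel Pord := by
  refine ⟨fun a => Or.inl rfl, ?_, ?_⟩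
  · rintro a b (rfl | ⟨he, hc, -⟩) h2
    · rfl
    · rcases h2 with rfl | ⟨he2, hc2, -⟩
      · rfl
      · exfalso
        rcases hc with ⟨h1, (h2' | h2')⟩ <;> rcases hc2 with ⟨h3, -⟩ <;> omega
  · rintro a b c (rfl | ⟨he, hc, hn⟩) h2
    · exact h2
    · rcases h2 with rfl | ⟨he2, hc2, hn2⟩
      · exact Or.inr ⟨he, hc, hn⟩
      · exfalso
        rcases hc with ⟨h1, (h2' | h2')⟩ <;> rcases hc2 with ⟨h3, -⟩ <;>
          simp only [he] at * <;> omega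

theorem hasCrown_pord_of_not_halting {n : ℕ} (hn : n ∉ HaltingSet) :
    HasCrown Pord (n + 3) := by
  refine ⟨fun i => Nat.pair n i, fun i => Nat.pair n (n + 3 + i), ?_, ?_, ?_, ?_⟩
  · intro i _ j _ hij h
    exact hij (Nat.pair_eq_pair.1 h).2
  · intro i _ j _ hij h
    have := (Nat.pair_eq_pair.1 h).2
    omega
  · intro i hi j _ h
    have := (Nat.pair_eq_pair.1 h).2
    omega
  · intro i hi
    constructor
    · exact Or.inr (by simp [Nat.unpair_pair, crownRel, hi, hn])
    · refine Or.inr (by simp [Nat.unpair_pair, crownRel, hi, hn])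

section Cycle

/-- Key combinatorial lemma: an injective map of the `K`-cycle into the `K'`-cycle,
moving by `±1` at each step, forces `K = K'`. -/
theorem zmod_cycle_eq {K K' : ℕ} (hK : 3 ≤ K) (hK' : 3 ≤ K')
    (H : ZMod K → ZMod K') (Hinj : Function.Injective H)
    (hstep : ∀ i : ZMod K, H (i + 1) = H i + 1 ∨ H (i + 1) = H i - 1) : K = K' := by
  haveI : NeZero K := ⟨by omega⟩
  haveI : NeZero K' := ⟨by omega⟩
  haveI : Fact (1 < K) := ⟨by omega⟩
  haveI : Fact (1 < K') := ⟨by omega⟩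
  have h2K : ((2 : ℕ) : ZMod K) ≠ 0 := by
    intro h
    rw [ZMod.natCast_eq_zero_iff] at h
    have := Nat.le_of_dvd (by norm_num) h
    omega
  -- at each step the direction is propagated
  have prop1 : ∀ i : ZMod K, H (i + 1) = H i + 1 → H (i + 1 + 1) = H (i + 1) + 1 := by
    intro i h1
    rcases hstep (i + 1) with h | h
    · exact h
    · exfalso
      rw [h1] at h
      have : H (i + 1 + 1) = H i := by rw [h]; ring
      have := Hinj this
      apply h2K
      have : (i + 1 + 1) - i = (0 : ZMod K) := by rw [this]; ring
      calc ((2:ℕ) : ZMod K) = (i + 1 + 1) - i := by push_cast; ring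
        _ = 0 := this
  have prop2 : ∀ i : ZMod K, H (i + 1) = H i - 1 → H (i + 1 + 1) = H (i + 1) - 1 := by
    intro i h1
    rcases hstep (i + 1) with h | h
    · exfalso
      rw [h1] at h
      have : H (i + 1 + 1) = H i := by rw [h]; ring
      have := Hinj this
      apply h2K
      have : (i + 1 + 1) - i = (0 : ZMod K) := by rw [this]; ring
      calc ((2:ℕ) : ZMod K) = (i + 1 + 1) - i := by push_cast; ring
        _ = 0 := this
    · exact h
  -- hence the direction is globally constant, and H is an arithmetic progression
  rcases hstep 0 with h0 | h0
  · have hall : ∀ n : ℕ, H ((n : ZMod K) + 1) = H (n : ZMod K) + 1 := by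
      intro n
      induction n with
      | zero => simpa using h0
      | succ m ih =>
        have := prop1 (m : ZMod K) ih
        simpa [Nat.cast_succ, add_assoc] using this
    have hprog : ∀ n : ℕ, H (n : ZMod K) = H 0 + (n : ZMod K') := by
      intro n
      induction n with
      | zero => simp
      | succ m ih =>
        have := hall m
        rw [show ((m + 1 : ℕ) : ZMod K) = (m : ZMod K) + 1 by push_cast; ring, this, ih]
        push_cast; ring
    have hKc : ((K : ℕ) : ZMod K') = 0 := by
      have := hprog K
      rw [ZMod.natCast_self] at this
      have : H 0 = H 0 + ((K : ℕ) : ZMod K') := by simpa using this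
      linear_combination -this
    have hdvd : K' ∣ K := (ZMod.natCast_eq_zero_iff _ _).1 hKc
    have hle : K ≤ K' := by
      have := Fintype.card_le_of_injective H Hinj
      simpa [ZMod.card] using this
    exact le_antisymm hle (Nat.le_of_dvd (by omega) hdvd)
  · have hall : ∀ n : ℕ, H ((n : ZMod K) + 1) = H (n : ZMod K) - 1 := by
      intro n
      induction n with
      | zero => simpa using h0
      | succ m ih =>
        have := prop2 (m : ZMod K) ih
        simpa [Nat.cast_succ, add_assoc] using this
    have hprog : ∀ n : ℕ, H (n : ZMod K) = H 0 - (n : ZMod K') := by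
      intro n
      induction n with
      | zero => simp
      | succ m ih =>
        have := hall m
        rw [show ((m + 1 : ℕ) : ZMod K) = (m : ZMod K) + 1 by push_cast; ring, this, ih]
        push_cast; ring
    have hKc : ((K : ℕ) : ZMod K') = 0 := by
      have := hprog K
      rw [ZMod.natCast_self] at this
      have : H 0 = H 0 - ((K : ℕ) : ZMod K') := by simpa using this
      linear_combination this
    have hdvd : K' ∣ K := (ZMod.natCast_eq_zero_iff _ _).1 hKc
    have hle : K ≤ K' := by
      have := Fintype.card_le_of_injective H Hinj
      simpa [ZMod.card] using this
    exact le_antisymm hle (Nat.le_of_dvd (by omega) hdvd)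

end Cycle

theorem pord_strict {x y : ℕ} (h : Pord x y) (hne : x ≠ y) :
    y.unpair.1 = x.unpair.1 ∧ x.unpair.2 < x.unpair.1 + 3 ∧
      (y.unpair.2 = x.unpair.1 + 3 + x.unpair.2 ∨
        y.unpair.2 = x.unpair.1 + 3 + ((x.unpair.2 + 1) % (x.unpair.1 + 3))) ∧
      x.unpair.1 ∉ HaltingSet := by
  rcases h with rfl | ⟨he, ⟨h1, h2⟩, hn⟩
  · exact absurd rfl hne
  · exact ⟨he.symm, h1, h2, hn⟩

theorem not_halting_of_hasCrown_pord {K : ℕ} (hK : 3 ≤ K) (h : HasCrown Pord K) :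
    ∃ m, K = m + 3 ∧ m ∉ HaltingSet := by
  obtain ⟨a, b, ha, hb, hab, hrel⟩ := h
  set m := (a 0).unpair.1 with hm
  -- strict-edge facts
  have E1 : ∀ i, i < K → (b i).unpair.1 = (a i).unpair.1 ∧
      (a i).unpair.2 < (a i).unpair.1 + 3 ∧
      ((b i).unpair.2 = (a i).unpair.1 + 3 + (a i).unpair.2 ∨
        (b i).unpair.2 = (a i).unpair.1 + 3 + (((a i).unpair.2 + 1) % ((a i).unpair.1 + 3))) ∧
      (a i).unpair.1 ∉ HaltingSet := by
    intro i hi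
    exact pord_strict (hrel i hi).1 (hab i hi i hi)
  have E2 : ∀ i, i < K → (b ((i + 1) % K)).unpair.1 = (a i).unpair.1 ∧
      ((b ((i + 1) % K)).unpair.2 = (a i).unpair.1 + 3 + (a i).unpair.2 ∨
        (b ((i + 1) % K)).unpair.2 =
          (a i).unpair.1 + 3 + (((a i).unpair.2 + 1) % ((a i).unpair.1 + 3))) := by
    intro i hi
    have := pord_strict (hrel i hi).2 (hab i hi ((i + 1) % K) (Nat.mod_lt _ (by omega)))
    exact ⟨this.1, this.2.2.1⟩
  -- all points lie in block m
  have blocks : ∀ i, i < K → (a i).unpair.1 = m ∧ (b i).unpair.1 = m := by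
    intro i
    induction i with
    | zero => intro h0; exact ⟨rfl, (E1 0 h0).1⟩
    | succ i ih =>
      intro hi1
      have hi : i < K := by omega
      have hmod : (i + 1) % K = i + 1 := Nat.mod_eq_of_lt hi1
      have hbi1 : (b (i + 1)).unpair.1 = m := by
        have := (E2 i hi).1
        rw [hmod] at this
        rw [this, (ih hi).1]
      have hai1 : (a (i + 1)).unpair.1 = m := by
        have := (E1 (i + 1) hi1).1
        omega
      exact ⟨hai1, hbi1⟩
  set K' := m + 3 with hK'
  have hK'3 : 3 ≤ K' := by omega
  -- index functions
  set g : ℕ → ℕ := fun i => (a i).unpair.2 with hg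
  set f : ℕ → ℕ := fun i => (b i).unpair.2 - K' with hf
  have gval : ∀ i, i < K → g i < K' := by
    intro i hi
    have := (E1 i hi).2.1
    rw [(blocks i hi).1] at this
    exact this
  have bval : ∀ i, i < K → (b i).unpair.2 = K' + f i ∧ f i < K' ∧
      (f i = g i ∨ f i = (g i + 1) % K') := by
    intro i hi
    have h1 := (E1 i hi).2.2.1
    rw [(blocks i hi).1] at h1
    rcases h1 with h1 | h1
    · refine ⟨by simp [hf, h1, hK'], by simp [hf, h1, hK']; exact gval i hi, Or.inl (by simp [hf, h1, hK', hg])⟩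
    · have hmlt : (g i + 1) % K' < K' := Nat.mod_lt _ (by omega)
      exact ⟨by simp [hf, h1, hK'], by simp [hf, h1, hK']; exact hmlt, Or.inr (by simp [hf, h1, hK', hg])⟩
  have bval2 : ∀ i, i < K →
      (f ((i + 1) % K) = g i ∨ f ((i + 1) % K) = (g i + 1) % K') := by
    intro i hi
    have h1 := (E2 i hi).2
    rw [(blocks i hi).1] at h1
    rcases h1 with h1 | h1
    · exact Or.inl (by simp [hf, h1, hK', hg])
    · exact Or.inr (by simp [hf, h1, hK', hg])
  have finj : ∀ i, i < K → ∀ j, j < K → i ≠ j → f i ≠ f j := by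
    intro i hi j hj hij hEq
    apply hb i hi j hj hij
    have h1 := (bval i hi).1
    have h2 := (bval j hj).1
    have : (b i).unpair = (b j).unpair := by
      have e1 := (blocks i hi).2
      have e2 := (blocks j hj).2
      exact Prod.ext (by rw [e1, e2]) (by rw [h1, h2, hEq])
    have := congrArg (fun p : ℕ × ℕ => Nat.pair p.1 p.2) this
    simpa [Nat.pair_unpair] using this
  -- pass to ZMod
  haveI : NeZero K := ⟨by omega⟩
  haveI : NeZero K' := ⟨by omega⟩
  haveI : Fact (1 < K) := ⟨by omega⟩
  set H : ZMod K → ZMod K' := fun i => ((f i.val : ℕ) : ZMod K') with hH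
  have Hinj : Function.Injective H := by
    intro i j hEq
    by_contra hne
    have hival : i.val < K := ZMod.val_lt i
    have hjval : j.val < K := ZMod.val_lt j
    have h1 : f i.val < K' := (bval _ hival).2.1
    have h2 : f j.val < K' := (bval _ hjval).2.1
    have : f i.val = f j.val := by
      have := congrArg ZMod.val hEq
      rwa [ZMod.val_natCast_of_lt h1, ZMod.val_natCast_of_lt h2] at this
    have hvne : i.val ≠ j.val := fun hv => hne (ZMod.val_injective _ hv)
    exact finj _ hival _ hjval hvne this
  have hstep : ∀ i : ZMod K, H (i + 1) = H i + 1 ∨ H (i + 1) = H i - 1 := by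
    intro i
    have hival : i.val < K := ZMod.val_lt i
    have hadd : (i + 1).val = (i.val + 1) % K := by
      rw [ZMod.val_add, ZMod.val_one]
    have hne : H (i + 1) ≠ H i := by
      intro hEq
      have := Hinj hEq
      have : (1 : ZMod K) = 0 := by
        have h' := sub_eq_zero.2 this
        simpa using h'
      exact one_ne_zero this
    have c1 := (bval i.val hival).2.2
    have c2 := bval2 i.val hival
    rw [← hadd] at c2
    have hcast : (((g i.val + 1) % K' : ℕ) : ZMod K') = ((g i.val : ℕ) : ZMod K') + 1 := by
      rw [ZMod.natCast_mod]
      push_cast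
      ring
    set u : ZMod K' := ((g i.val : ℕ) : ZMod K') with hu
    have d1 : H i = u ∨ H i = u + 1 := by
      rcases c1 with h' | h'
      · exact Or.inl (by rw [hH]; simp only [h', hu])
      · exact Or.inr (by rw [hH]; simp only [h', hcast])
    have d2 : H (i + 1) = u ∨ H (i + 1) = u + 1 := by
      rcases c2 with h' | h'
      · exact Or.inl (by rw [hH]; simp only [h', hu])
      · exact Or.inr (by rw [hH]; simp only [h', hcast])
    rcases d1 with h1 | h1 <;> rcases d2 with h2 | h2
    · exact absurd (h2.trans h1.symm) hne
    · exact Or.inl (by rw [h1, h2])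
    · exact Or.inr (by rw [h1, h2]; ring)
    · exact absurd (h2.trans h1.symm) hne
  have := zmod_cycle_eq hK hK'3 H Hinj hstep
  refine ⟨m, this, ?_⟩
  have := (E1 0 (by omega)).2.2.2
  rwa [(blocks 0 (by omega)).1] at this

section Computability

/-- Bounded Boolean universal quantifier. -/
def ballB (p : ℕ → Bool) (K : ℕ) : Bool :=
  Nat.rec true (fun n IH => IH && p n) K

theorem ballB_eq_true {p : ℕ → Bool} {K : ℕ} :
    ballB p K = true ↔ ∀ i < K, p i = true := by
  induction K with
  | zero => simp [ballB]
  | succ n ih =>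
    show (ballB p n && p n) = true ↔ _
    rw [Bool.and_eq_true, ih]
    constructor
    · rintro ⟨h1, h2⟩ i hi
      rcases Nat.lt_succ_iff_lt_or_eq.1 hi with h | rfl
      · exact h1 i h
      · exact h2
    · intro h
      exact ⟨fun i hi => h i (by omega), h n (by omega)⟩

theorem primrec_ballB {α : Type} [Primcodable α] {f : α → ℕ} {p : α → ℕ → Bool}
    (hf : Primrec f) (hp : Primrec₂ p) : Primrec fun a => ballB (p a) (f a) := by
  have : Primrec₂ fun (a : α) (q : ℕ × Bool) => q.2 && p a q.1 :=
    (Primrec.dom_bool₂ (· && ·)).comp (Primrec.snd.comp Primrec.snd)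
      (hp.comp Primrec.fst (Primrec.fst.comp Primrec.snd))
  exact (Primrec.nat_rec' hf (Primrec.const true) this).of_eq fun a => rfl

theorem haltingSet_re : REPred (· ∈ HaltingSet) := by
  have hp : Partrec fun n : ℕ => (Denumerable.ofNat Code n).eval n :=
    eval_part.comp (Computable.ofNat _) Computable.id
  exact hp.dom_re.of_eq fun n => Iff.rfl

theorem not_re_not_halting : ¬ REPred (· ∉ HaltingSet) := by
  intro h
  have h' : Partrec fun n : ℕ =>
      (Part.assert (n ∉ HaltingSet) fun _ => Part.some ()).map fun _ => 0 :=
    Partrec.map h ((Computable.const 0).to₂)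
  obtain ⟨c, hc⟩ := exists_code.1 (Partrec.nat_iff.1 h')
  have key : (eval c (Encodable.encode c)).Dom ↔ Encodable.encode c ∉ HaltingSet := by
    rw [hc]
    simp [Part.assert]
  have key2 : Encodable.encode c ∈ HaltingSet ↔ (eval c (Encodable.encode c)).Dom := by
    simp [HaltingSet, Denumerable.ofNat_encode]
  tauto

theorem repred_exists {B : ℕ → ℕ → Bool} (hB : Computable₂ B) :
    REPred fun n => ∃ k, B n k = true := by
  have h := Partrec.rfind hB.partrec₂
  refine h.dom_re.of_eq fun n => ?_
  rw [Nat.rfind_dom]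
  constructor
  · rintro ⟨k, hk, -⟩
    exact ⟨k, by simpa using hk⟩
  · rintro ⟨k, hk⟩
    exact ⟨k, by simpa using hk, fun {m} _ => trivial⟩

end Computability

section CoCE

/-- Boolean test for the "static" part of `Pord` (equal blocks and crown-related). -/
def goodB (m : ℕ) : Bool :=
  decide (m.unpair.1.unpair.1 = m.unpair.2.unpair.1) &&
    decide (m.unpair.1.unpair.2 < m.unpair.1.unpair.1 + 3) &&
    (decide (m.unpair.2.unpair.2 = m.unpair.1.unpair.1 + 3 + m.unpair.1.unpair.2) ||
      decide (m.unpair.2.unpair.2 =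
        m.unpair.1.unpair.1 + 3 + ((m.unpair.1.unpair.2 + 1) % (m.unpair.1.unpair.1 + 3))))

theorem goodB_eq_true {m : ℕ} : goodB m = true ↔
    (m.unpair.1.unpair.1 = m.unpair.2.unpair.1 ∧
      crownRel (m.unpair.1.unpair.1 + 3) m.unpair.1.unpair.2 m.unpair.2.unpair.2) := by
  simp [goodB, crownRel, and_assoc]

theorem primrec_goodB : Primrec goodB := by
  have u : Primrec Nat.unpair := Primrec.unpair
  have x1 : Primrec fun m : ℕ => m.unpair.1.unpair.1 :=
    Primrec.fst.comp (u.comp (Primrec.fst.comp u))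
  have x2 : Primrec fun m : ℕ => m.unpair.1.unpair.2 :=
    Primrec.snd.comp (u.comp (Primrec.fst.comp u))
  have y1 : Primrec fun m : ℕ => m.unpair.2.unpair.1 :=
    Primrec.fst.comp (u.comp (Primrec.snd.comp u))
  have y2 : Primrec fun m : ℕ => m.unpair.2.unpair.2 :=
    Primrec.snd.comp (u.comp (Primrec.snd.comp u))
  have k : Primrec fun m : ℕ => m.unpair.1.unpair.1 + 3 :=
    Primrec.nat_add.comp x1 (Primrec.const 3)
  have b1 : Primrec fun m : ℕ => decide (m.unpair.1.unpair.1 = m.unpair.2.unpair.1) :=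
    Primrec.eq.decide.comp x1 y1
  have b2 : Primrec fun m : ℕ => decide (m.unpair.1.unpair.2 < m.unpair.1.unpair.1 + 3) :=
    Primrec.nat_lt.decide.comp x2 k
  have b3 : Primrec fun m : ℕ =>
      decide (m.unpair.2.unpair.2 = m.unpair.1.unpair.1 + 3 + m.unpair.1.unpair.2) :=
    Primrec.eq.decide.comp y2 (Primrec.nat_add.comp k x2)
  have b4 : Primrec fun m : ℕ => decide (m.unpair.2.unpair.2 =
      m.unpair.1.unpair.1 + 3 + ((m.unpair.1.unpair.2 + 1) % (m.unpair.1.unpair.1 + 3))) :=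
    Primrec.eq.decide.comp y2 (Primrec.nat_add.comp k
      (Primrec.nat_mod.comp (Primrec.nat_add.comp x2 (Primrec.const 1)) k))
  exact ((Primrec.dom_bool₂ (· && ·)).comp
    ((Primrec.dom_bool₂ (· && ·)).comp b1 b2)
    ((Primrec.dom_bool₂ (· || ·)).comp b3 b4))

theorem pord_coce : SetCoCE (codedSet Pord) := by
  have heq : Computable fun m : ℕ => decide (m.unpair.1 = m.unpair.2) :=
    (Primrec.eq.decide.comp (Primrec.fst.comp Primrec.unpair)
      (Primrec.snd.comp Primrec.unpair)).to_comp
  have hgood : Computable goodB := primrec_goodB.to_comp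
  have hn : Computable fun m : ℕ => m.unpair.1.unpair.1 :=
    (Primrec.fst.comp (Primrec.unpair.comp (Primrec.fst.comp Primrec.unpair))).to_comp
  have hhal : Partrec fun m : ℕ =>
      ((Denumerable.ofNat Code m.unpair.1.unpair.1).eval m.unpair.1.unpair.1).map
        fun _ => () :=
    (eval_part.comp ((Computable.ofNat _).comp hn) hn).map ((Computable.const ()).to₂)
  have hP : Partrec fun m : ℕ =>
      bif decide (m.unpair.1 = m.unpair.2) then Part.none
      else bif goodB m then
        ((Denumerable.ofNat Code m.unpair.1.unpair.1).eval m.unpair.1.unpair.1).map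
          fun _ => ()
      else Part.some () :=
    Partrec.cond heq Partrec.none (Partrec.cond hgood hhal (Partrec.const' _))
  refine hP.dom_re.of_eq fun m => ?_
  by_cases h1 : m.unpair.1 = m.unpair.2
  · rw [decide_eq_true h1, cond_true]
    simp only [iff_false, Part.not_none_dom, false_iff]
    intro hcon
    exact hcon (Or.inl h1)
  · rw [decide_eq_false h1, cond_false]
    by_cases h2 : goodB m = true
    · simp only [h2, cond_true, Part.map_Dom]
      rw [goodB_eq_true] at h2
      constructor
      · intro hdom hcon
        rcases hcon with hcon | ⟨-, -, hnot⟩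
        · exact h1 hcon
        · exact hnot hdom
      · intro hcon
        by_contra hdom
        exact hcon (Or.inr ⟨h2.1, h2.2, hdom⟩)
    · rw [Bool.eq_false_iff.2 (fun hx => h2 hx)]  -- goodB m = false
      simp only [cond_false]
      constructor
      · intro _ hcon
        rcases hcon with hcon | ⟨he, hc, -⟩
        · exact h1 hcon
        · exact h2 (goodB_eq_true.2 ⟨he, hc⟩)
      · intro _
        exact trivial

end CoCE

section Bmat

/-- Decode the `i`-th entry of the list coded by `w`. -/
def Efun (w i : ℕ) : ℕ := (Denumerable.ofNat (List ℕ) w).getD i 0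

/-- Stage-`s` halting test. -/
def okB (c : Code) (s p : ℕ) : Bool := (evaln s c p).isSome

/-- The witness matrix: `Bmat c n z = true` iff `z` codes a stage and a list of
`2(n+3)` distinct numbers forming a crown for the relation semi-decided by `c`. -/
def Bmat (c : Code) (n z : ℕ) : Bool :=
  (ballB (fun i => ballB (fun j =>
      decide (i = j) || !decide (Efun z.unpair.2 i = Efun z.unpair.2 j)) (2 * (n + 3)))
      (2 * (n + 3))) &&
    ballB (fun i =>
      okB c z.unpair.1 (Nat.pair (Efun z.unpair.2 i) (Efun z.unpair.2 ((n + 3) + i))) &&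
        okB c z.unpair.1 (Nat.pair (Efun z.unpair.2 i)
          (Efun z.unpair.2 ((n + 3) + ((i + 1) % (n + 3)))))) (n + 3)

theorem computable_Bmat (c : Code) : Computable₂ (Bmat c) := by
  have hEfun : Primrec₂ Efun :=
    ((Primrec.list_getD 0).comp ((Primrec.ofNat (List ℕ)).comp Primrec.fst)
      Primrec.snd).to₂
  have hokB : Primrec₂ (okB c) :=
    (Primrec.option_isSome.comp (Nat.Partrec.Code.primrec_evaln.comp
      (((Primrec.fst.pair (Primrec.const c))).pair Primrec.snd))).to₂
  -- inner distinctness test, as a function of ((n, z), i) and j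
  have hp1 : Primrec₂ fun (b : (ℕ × ℕ) × ℕ) (j : ℕ) =>
      (decide (b.2 = j) || !decide (Efun b.1.2.unpair.2 b.2 = Efun b.1.2.unpair.2 j)) := by
    have hw : Primrec fun q : ((ℕ × ℕ) × ℕ) × ℕ => q.1.1.2.unpair.2 :=
      Primrec.snd.comp (Primrec.unpair.comp
        (Primrec.snd.comp (Primrec.fst.comp Primrec.fst)))
    have hi : Primrec fun q : ((ℕ × ℕ) × ℕ) × ℕ => q.1.2 := Primrec.snd.comp Primrec.fst
    have hj : Primrec fun q : ((ℕ × ℕ) × ℕ) × ℕ => q.2 := Primrec.snd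
    exact ((Primrec.dom_bool₂ (· || ·)).comp (Primrec.eq.decide.comp hi hj)
      (Primrec.not.comp (Primrec.eq.decide.comp (hEfun.comp hw hi) (hEfun.comp hw hj))))
  have hinner : Primrec fun b : (ℕ × ℕ) × ℕ => ballB (fun j =>
      decide (b.2 = j) || !decide (Efun b.1.2.unpair.2 b.2 = Efun b.1.2.unpair.2 j))
      (2 * (b.1.1 + 3)) :=
    primrec_ballB (Primrec.nat_mul.comp (Primrec.const 2)
      (Primrec.nat_add.comp (Primrec.fst.comp Primrec.fst) (Primrec.const 3))) hp1
  have hcond1 : Primrec fun a : ℕ × ℕ => ballB (fun i => ballB (fun j =>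
      decide (i = j) || !decide (Efun a.2.unpair.2 i = Efun a.2.unpair.2 j))
      (2 * (a.1 + 3))) (2 * (a.1 + 3)) :=
    primrec_ballB (Primrec.nat_mul.comp (Primrec.const 2)
      (Primrec.nat_add.comp Primrec.fst (Primrec.const 3))) hinner.to₂
  -- the crown-edge test, as a function of (n, z) and i
  have hp2 : Primrec₂ fun (a : ℕ × ℕ) (i : ℕ) =>
      (okB c a.2.unpair.1 (Nat.pair (Efun a.2.unpair.2 i) (Efun a.2.unpair.2 ((a.1 + 3) + i)))
        && okB c a.2.unpair.1 (Nat.pair (Efun a.2.unpair.2 i)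
          (Efun a.2.unpair.2 ((a.1 + 3) + ((i + 1) % (a.1 + 3)))))) := by
    have hs : Primrec fun q : (ℕ × ℕ) × ℕ => q.1.2.unpair.1 :=
      Primrec.fst.comp (Primrec.unpair.comp (Primrec.snd.comp Primrec.fst))
    have hw : Primrec fun q : (ℕ × ℕ) × ℕ => q.1.2.unpair.2 :=
      Primrec.snd.comp (Primrec.unpair.comp (Primrec.snd.comp Primrec.fst))
    have hK : Primrec fun q : (ℕ × ℕ) × ℕ => q.1.1 + 3 :=
      Primrec.nat_add.comp (Primrec.fst.comp Primrec.fst) (Primrec.const 3)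
    have hi : Primrec fun q : (ℕ × ℕ) × ℕ => q.2 := Primrec.snd
    have e1 : Primrec fun q : (ℕ × ℕ) × ℕ => Efun q.1.2.unpair.2 q.2 := hEfun.comp hw hi
    have e2 : Primrec fun q : (ℕ × ℕ) × ℕ => Efun q.1.2.unpair.2 (q.1.1 + 3 + q.2) :=
      hEfun.comp hw (Primrec.nat_add.comp hK hi)
    have e3 : Primrec fun q : (ℕ × ℕ) × ℕ =>
        Efun q.1.2.unpair.2 (q.1.1 + 3 + ((q.2 + 1) % (q.1.1 + 3))) :=
      hEfun.comp hw (Primrec.nat_add.comp hK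
        (Primrec.nat_mod.comp (Primrec.nat_add.comp hi (Primrec.const 1)) hK))
    exact ((Primrec.dom_bool₂ (· && ·)).comp
      (hokB.comp hs (Primrec₂.natPair.comp e1 e2))
      (hokB.comp hs (Primrec₂.natPair.comp e1 e3)))
  have hcond2 : Primrec fun a : ℕ × ℕ => ballB (fun i =>
      okB c a.2.unpair.1 (Nat.pair (Efun a.2.unpair.2 i) (Efun a.2.unpair.2 ((a.1 + 3) + i)))
        && okB c a.2.unpair.1 (Nat.pair (Efun a.2.unpair.2 i)
          (Efun a.2.unpair.2 ((a.1 + 3) + ((i + 1) % (a.1 + 3)))))) (a.1 + 3) :=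
    primrec_ballB (Primrec.nat_add.comp Primrec.fst (Primrec.const 3)) hp2
  exact ((Primrec.dom_bool₂ (· && ·)).comp hcond1 hcond2).to_comp.to₂

end Bmat

theorem okB_mono {c : Code} {s s' p : ℕ} (h : s ≤ s') (hs : okB c s p = true) :
    okB c s' p = true := by
  simp only [okB, Option.isSome_iff_exists] at hs ⊢
  obtain ⟨v, hv⟩ := hs
  exact ⟨v, evaln_mono h hv⟩

theorem okB_dom {c : Code} {s p : ℕ} (hs : okB c s p = true) : (eval c p).Dom := by
  simp only [okB, Option.isSome_iff_exists] at hs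
  obtain ⟨v, hv⟩ := hs
  exact Part.dom_iff_mem.2 ⟨v, evaln_sound hv⟩

theorem bmat_iff (c : Code) {Q : ℕ → ℕ → Prop}
    (hQ : ∀ x y, (eval c (Nat.pair x y)).Dom ↔ Q x y) (n : ℕ) :
    (∃ z, Bmat c n z = true) ↔ HasCrown Q (n + 3) := by
  set K := n + 3 with hKdef
  have hK0 : 0 < K := by omega
  constructor
  · rintro ⟨z, hz⟩
    rw [Bmat, Bool.and_eq_true] at hz
    obtain ⟨h1, h2⟩ := hz
    rw [ballB_eq_true] at h1 h2
    set w := z.unpair.2 with hw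
    have hdis : ∀ i < 2 * K, ∀ j < 2 * K, i ≠ j → Efun w i ≠ Efun w j := by
      intro i hi j hj hij
      have h' := ballB_eq_true.1 (h1 i hi) j hj
      rw [Bool.or_eq_true, decide_eq_true_eq, Bool.not_eq_true',
        decide_eq_false_iff_not] at h'
      tauto
    refine ⟨fun i => Efun w i, fun i => Efun w (K + i), ?_, ?_, ?_, ?_⟩
    · intro i hi j hj hij
      exact hdis i (by omega) j (by omega) hij
    · intro i hi j hj hij
      exact hdis (K + i) (by omega) (K + j) (by omega) (by omega)
    · intro i hi j hj
      exact hdis i (by omega) (K + j) (by omega) (by omega)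
    · intro i hi
      have h' := h2 i hi
      rw [Bool.and_eq_true] at h'
      exact ⟨(hQ _ _).1 (okB_dom h'.1), (hQ _ _).1 (okB_dom h'.2)⟩
  · rintro ⟨a, b, ha, hb, hab, hrel⟩
    have hstage : ∀ i, ∃ s, i < K → okB c s (Nat.pair (a i) (b i)) = true ∧
        okB c s (Nat.pair (a i) (b ((i + 1) % K))) = true := by
      intro i
      by_cases hi : i < K
      · have q1 := (hQ _ _).2 (hrel i hi).1
        have q2 := (hQ _ _).2 (hrel i hi).2
        obtain ⟨v1, hv1⟩ := Part.dom_iff_mem.1 q1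
        obtain ⟨v2, hv2⟩ := Part.dom_iff_mem.1 q2
        obtain ⟨s1, hs1⟩ := evaln_complete.1 hv1
        obtain ⟨s2, hs2⟩ := evaln_complete.1 hv2
        refine ⟨max s1 s2, fun _ => ⟨?_, ?_⟩⟩
        · simp only [okB, Option.isSome_iff_exists]
          exact ⟨v1, evaln_mono (le_max_left s1 s2) hs1⟩
        · simp only [okB, Option.isSome_iff_exists]
          exact ⟨v2, evaln_mono (le_max_right s1 s2) hs2⟩
      · exact ⟨0, fun h => absurd h hi⟩
    choose st hst using hstage
    set S := (Finset.range K).sup st with hS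
    have hSok : ∀ i, i < K → okB c S (Nat.pair (a i) (b i)) = true ∧
        okB c S (Nat.pair (a i) (b ((i + 1) % K))) = true := by
      intro i hi
      have hle : st i ≤ S := Finset.le_sup (Finset.mem_range.2 hi)
      exact ⟨okB_mono hle (hst i hi).1, okB_mono hle (hst i hi).2⟩
    set L : List ℕ := ((List.range K).map a) ++ ((List.range K).map b) with hL
    set w := Encodable.encode L with hwdef
    have hofNat : Denumerable.ofNat (List ℕ) w = L := Denumerable.ofNat_encode L
    have hlen1 : ((List.range K).map a).length = K := by simp
    have hE1 : ∀ i, i < K → Efun w i = a i := by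
      intro i hi
      rw [Efun, hofNat, hL, List.getD_append _ _ _ _ (by simpa using hi),
        List.getD_eq_getElem _ _ (by simpa using hi)]
      simp
    have hE2 : ∀ i, i < K → Efun w (K + i) = b i := by
      intro i hi
      have hle : ((List.range K).map a).length ≤ K + i := by simp
      rw [Efun, hofNat, hL, List.getD_append_right _ _ _ _ hle]
      have h2 : K + i - ((List.range K).map a).length = i := by simp
      rw [h2, List.getD_eq_getElem _ _ (by simpa using hi)]
      simp
    have hEgen : ∀ i, i < 2 * K →
        Efun w i = (if i < K then a i else b (i - K)) := by
      intro i hi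
      by_cases h' : i < K
      · rw [if_pos h', hE1 i h']
      · rw [if_neg h']
        have h3 := hE2 (i - K) (by omega)
        rw [show K + (i - K) = i by omega] at h3
        exact h3
    refine ⟨Nat.pair S w, ?_⟩
    rw [Bmat, Bool.and_eq_true]
    constructor
    · rw [Nat.unpair_pair]
      rw [ballB_eq_true]
      intro i hi
      rw [ballB_eq_true]
      intro j hj
      rw [Bool.or_eq_true, decide_eq_true_eq, Bool.not_eq_true', decide_eq_false_iff_not]
      by_cases hij : i = j
      · exact Or.inl hij
      · refine Or.inr ?_
        rw [hEgen i hi, hEgen j hj]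
        by_cases h1 : i < K <;> by_cases h2 : j < K
        · rw [if_pos h1, if_pos h2]; exact ha i h1 j h2 hij
        · rw [if_pos h1, if_neg h2]; exact hab i h1 (j - K) (by omega)
        · rw [if_neg h1, if_pos h2]
          exact Ne.symm (hab j h2 (i - K) (by omega))
        · rw [if_neg h1, if_neg h2]; exact hb (i - K) (by omega) (j - K) (by omega) (by omega)
    · rw [Nat.unpair_pair]
      rw [ballB_eq_true]
      intro i hi
      rw [Bool.and_eq_true]
      have e1 := hE1 i hi
      have e2 := hE2 i hi
      have e3 := hE2 ((i + 1) % K) (Nat.mod_lt _ hK0)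
      rw [e1, e2, e3]
      exact hSok i hi

theorem hasCrown_mono {R S : ℕ → ℕ → Prop} {K : ℕ} (f : ℕ → ℕ)
    (hinj : Function.Injective f) (h : ∀ x y, R x y → S (f x) (f y)) :
    HasCrown R K → HasCrown S K := by
  rintro ⟨a, b, ha, hb, hab, hrel⟩
  refine ⟨f ∘ a, f ∘ b, ?_, ?_, ?_, ?_⟩
  · intro i hi j hj hij hEq
    exact ha i hi j hj hij (hinj hEq)
  · intro i hi j hj hij hEq
    exact hb i hi j hj hij (hinj hEq)
  · intro i hi j hj hEq
    exact hab i hi j hj (hinj hEq)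
  · intro i hi
    exact ⟨h _ _ (hrel i hi).1, h _ _ (hrel i hi).2⟩

theorem exists_coCE_partialOrder_not_iso_CE :
    ∃ P : ℕ → ℕ → Prop, PartialOrderRel P ∧ SetCoCE (codedSet P) ∧
      ∀ Q : ℕ → ℕ → Prop, PartialOrderRel Q → SetCE (codedSet Q) → ¬ Isomorphic P Q := by
  refine ⟨Pord, pord_partialOrder, pord_coce, ?_⟩
  rintro Q - hQce ⟨f, hfbij, hfiso⟩
  -- extract a code semi-deciding Q
  have h1 : Partrec fun m : ℕ =>
      (Part.assert (m ∈ codedSet Q) fun _ => Part.some ()).map fun _ => 0 :=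
    Partrec.map hQce ((Computable.const 0).to₂)
  obtain ⟨c, hc⟩ := exists_code.1 (Partrec.nat_iff.1 h1)
  have hcdom : ∀ x y : ℕ, (eval c (Nat.pair x y)).Dom ↔ Q x y := by
    intro x y
    rw [hc]
    simp [codedSet, Part.assert]
  -- the inverse bijection
  obtain ⟨g, hgf, hfg⟩ := Function.bijective_iff_has_inverse.1 hfbij
  have hginj : Function.Injective g := hfg.injective
  have hQP : ∀ x y, Q x y → Pord (g x) (g y) := by
    intro x y hxy
    rw [hfiso (g x) (g y), hfg x, hfg y]
    exact hxy
  have hPQ : ∀ x y, Pord x y → Q (f x) (f y) := fun x y h => (hfiso x y).1 h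
  -- the complement of the halting set would be c.e.
  have key : ∀ n : ℕ, n ∉ HaltingSet ↔ ∃ z, Bmat c n z = true := by
    intro n
    rw [bmat_iff c hcdom n]
    constructor
    · intro hn
      exact hasCrown_mono f hfbij.injective hPQ (hasCrown_pord_of_not_halting hn)
    · intro h
      have hP := hasCrown_mono g hginj hQP h
      obtain ⟨m, hm, hmn⟩ := not_halting_of_hasCrown_pord (by omega) hP
      have : m = n := by omega
      rwa [this] at hmn
  exact not_re_not_halting
    ((repred_exists (computable_Bmat c)).of_eq fun n => (key n).symm)

end CEOrders
end

section
/- There exists a partial order ≤_P on ℕ whose coded set is c.e. and which is not isomorphic to any partial order on ℕ whose coded set is co-c.e. -/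
namespace CEOrders

namespace NotIso

def blk (x : ℕ) : ℕ := x.unpair.1
def idx (x : ℕ) : ℕ := x.unpair.2

/-- The incomparability pattern inside block `n`: a path `i — i+1` together with a
bottom chord `(0,2)` (present iff `n ∉ HaltingSet`) and a top chord `(3n+4, 3n+6)`. -/
def pedge (n i j : ℕ) : Prop :=
  j = i + 1 ∨ (i = 0 ∧ j = 2 ∧ n ∉ HaltingSet) ∨ (i = 3 * n + 4 ∧ j = 3 * n + 6)

def EK (x y : ℕ) : Prop :=
  blk x = blk y ∧ idx y ≤ 3 * blk x + 6 ∧ pedge (blk x) (idx x) (idx y)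

def LexLt (x y : ℕ) : Prop :=
  blk x < blk y ∨ (blk x = blk y ∧ idx x < idx y)

/-- The partial order. -/
def Pord (x y : ℕ) : Prop := x = y ∨ (LexLt x y ∧ ¬ EK x y)

lemma eq_of_blk_idx {x y : ℕ} (h1 : blk x = blk y) (h2 : idx x = idx y) : x = y := by
  have hx : Nat.pair (blk x) (idx x) = x := Nat.pair_unpair x
  have hy : Nat.pair (blk y) (idx y) = y := Nat.pair_unpair y
  rw [← hx, ← hy, h1, h2]

lemma lex_asymm {x y : ℕ} (h1 : LexLt x y) (h2 : LexLt y x) : False := by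
  unfold LexLt at h1 h2; omega

lemma lex_irrefl {x : ℕ} (h : LexLt x x) : False := by
  unfold LexLt at h; omega

lemma lex_trans {x y z : ℕ} (h1 : LexLt x y) (h2 : LexLt y z) : LexLt x z := by
  unfold LexLt at h1 h2 ⊢; omega

lemma lex_total {x y : ℕ} (h : x ≠ y) : LexLt x y ∨ LexLt y x := by
  rcases Nat.lt_trichotomy (blk x) (blk y) with h1 | h1 | h1
  · exact Or.inl (Or.inl h1)
  · rcases Nat.lt_trichotomy (idx x) (idx y) with h2 | h2 | h2
    · exact Or.inl (Or.inr ⟨h1, h2⟩)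
    · exact absurd (eq_of_blk_idx h1 h2) h
    · exact Or.inr (Or.inr ⟨h1.symm, h2⟩)
  · exact Or.inr (Or.inl h1)

lemma pedge_lt {n i j : ℕ} (h : pedge n i j) : i < j := by
  rcases h with h | ⟨h1, h2, _⟩ | ⟨h1, h2⟩ <;> omega

lemma pord_partialOrder :
    (∀ a, Pord a a) ∧ (∀ a b, Pord a b → Pord b a → a = b) ∧
      (∀ a b c, Pord a b → Pord b c → Pord a c) := by
  refine ⟨fun a => Or.inl rfl, ?_, ?_⟩
  · rintro a b (rfl | ⟨h1, -⟩) h2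
    · rfl
    · rcases h2 with rfl | ⟨h2, -⟩
      · rfl
      · exact (lex_asymm h1 h2).elim
  · rintro a b c (rfl | ⟨h1, he1⟩) h2
    · exact h2
    · rcases h2 with rfl | ⟨h2, he2⟩
      · exact Or.inr ⟨h1, he1⟩
      · refine Or.inr ⟨lex_trans h1 h2, ?_⟩
        rintro ⟨hb, hr, hp⟩
        have hab : blk a = blk b ∧ blk b = blk c ∧ idx a < idx b ∧ idx b < idx c := by
          unfold LexLt at h1 h2; omega
        obtain ⟨hab1, hab2, hab3, hab4⟩ := hab
        rcases hp with hp | ⟨hp1, hp2, hpK⟩ | ⟨hp1, hp2⟩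
        · omega
        · exact he1 ⟨hab1, by omega, Or.inl (by omega)⟩
        · exact he2 ⟨hab2, by rw [← hab1]; omega, Or.inl (by omega)⟩

/-- Incomparability for `Pord`. -/
def IcmpP (x y : ℕ) : Prop := ¬ Pord x y ∧ ¬ Pord y x

lemma icmpP_iff {x y : ℕ} :
    IcmpP x y ↔ (LexLt x y ∧ EK x y) ∨ (LexLt y x ∧ EK y x) := by
  constructor
  · rintro ⟨h1, h2⟩
    have hxy : x ≠ y := fun h => h1 (Or.inl h)
    rcases lex_total hxy with hl | hl
    · refine Or.inl ⟨hl, ?_⟩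
      by_contra he
      exact h1 (Or.inr ⟨hl, he⟩)
    · refine Or.inr ⟨hl, ?_⟩
      by_contra he
      exact h2 (Or.inr ⟨hl, he⟩)
  · rintro (⟨hl, he⟩ | ⟨hl, he⟩) <;>
      exact ⟨by rintro (rfl | ⟨hl', he'⟩); exacts [lex_irrefl hl,
              absurd ‹_› (by first | exact fun h => he' he | exact fun _ => lex_asymm hl hl')],
            by rintro (rfl | ⟨hl', he'⟩); exacts [lex_irrefl hl,
              absurd ‹_› (by first | exact fun h => he' he | exact fun _ => lex_asymm hl hl')]⟩

lemma icmp_blk {x y : ℕ} (h : IcmpP x y) : blk x = blk y := by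
  rcases icmpP_iff.1 h with ⟨-, h, -, -⟩ | ⟨-, h, -, -⟩
  · exact h
  · exact h.symm

/-- Symmetric edge relation on in-block indices. -/
def Edg (m a b : ℕ) : Prop := (a < b ∧ pedge m a b) ∨ (b < a ∧ pedge m b a)

lemma icmp_edge {x y : ℕ} {m : ℕ} (hx : blk x = m) (hy : blk y = m) (h : IcmpP x y) :
    Edg m (idx x) (idx y) ∧ idx x ≤ 3 * m + 6 ∧ idx y ≤ 3 * m + 6 := by
  rcases icmpP_iff.1 h with ⟨-, -, hr, hp⟩ | ⟨-, -, hr, hp⟩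
  · rw [hx] at hr hp
    exact ⟨Or.inl ⟨pedge_lt hp, hp⟩, by have := pedge_lt hp; omega, hr⟩
  · rw [hy] at hr hp
    exact ⟨Or.inr ⟨pedge_lt hp, hp⟩, hr, by have := pedge_lt hp; omega⟩

lemma tri_aux {m a b c : ℕ} (hab : a < b) (hbc : b < c) (hac : pedge m a c) :
    (a = 0 ∧ b = 1 ∧ c = 2 ∧ m ∉ HaltingSet) ∨ (a = 3 * m + 4 ∧ b = 3 * m + 5 ∧ c = 3 * m + 6) := by
  rcases hac with h | ⟨h1, h2, h3⟩ | ⟨h1, h2⟩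
  · omega
  · exact Or.inl ⟨h1, by omega, h2, h3⟩
  · exact Or.inr ⟨h1, by omega, h2⟩

lemma tri_main {m u v w : ℕ} (huv : Edg m u v) (hvw : Edg m v w) (huw : Edg m u w) :
    ((u ≤ 2 ∧ v ≤ 2 ∧ w ≤ 2) ∧ m ∉ HaltingSet) ∨
      (3 * m + 4 ≤ u ∧ 3 * m + 4 ≤ v ∧ 3 * m + 4 ≤ w) := by
  rcases huv with ⟨o1, p1⟩ | ⟨o1, p1⟩ <;> rcases hvw with ⟨o2, p2⟩ | ⟨o2, p2⟩ <;>
    rcases huw with ⟨o3, p3⟩ | ⟨o3, p3⟩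
  · rcases tri_aux o1 o2 p3 with ⟨h1, h2, h3, h4⟩ | ⟨h1, h2, h3⟩
    · exact Or.inl ⟨by omega, h4⟩
    · exact Or.inr (by omega)
  · omega
  · rcases tri_aux o3 o2 p1 with ⟨h1, h2, h3, h4⟩ | ⟨h1, h2, h3⟩
    · exact Or.inl ⟨by omega, h4⟩
    · exact Or.inr (by omega)
  · rcases tri_aux o3 o1 p2 with ⟨h1, h2, h3, h4⟩ | ⟨h1, h2, h3⟩
    · exact Or.inl ⟨by omega, h4⟩
    · exact Or.inr (by omega)
  · rcases tri_aux o1 o3 p2 with ⟨h1, h2, h3, h4⟩ | ⟨h1, h2, h3⟩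
    · exact Or.inl ⟨by omega, h4⟩
    · exact Or.inr (by omega)
  · rcases tri_aux o2 o3 p1 with ⟨h1, h2, h3, h4⟩ | ⟨h1, h2, h3⟩
    · exact Or.inl ⟨by omega, h4⟩
    · exact Or.inr (by omega)
  · omega
  · rcases tri_aux o2 o1 p3 with ⟨h1, h2, h3, h4⟩ | ⟨h1, h2, h3⟩
    · exact Or.inl ⟨by omega, h4⟩
    · exact Or.inr (by omega)

/-- Soundness: any injective realization of the pattern of block `n` inside the
incomparability graph of `Pord` forces `n ∉ HaltingSet`. -/
lemma main_combinatorial {n : ℕ} {ψ : ℕ → ℕ}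
    (hinj : ∀ i ≤ 3 * n + 6, ∀ j ≤ 3 * n + 6, ψ i = ψ j → i = j)
    (hcons : ∀ k < 3 * n + 6, IcmpP (ψ k) (ψ (k + 1)))
    (hzt : IcmpP (ψ 0) (ψ 2))
    (htop : IcmpP (ψ (3 * n + 4)) (ψ (3 * n + 6))) :
    n ∉ HaltingSet := by
  set m := blk (ψ 0) with hm
  -- all elements lie in block m
  have hblk : ∀ k, k ≤ 3 * n + 6 → blk (ψ k) = m := by
    intro k
    induction k with
    | zero => intro _; rfl
    | succ k ih =>
      intro hk
      have h1 := icmp_blk (hcons k (by omega))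
      rw [← h1]
      exact ih (by omega)
  set φ : ℕ → ℕ := fun k => idx (ψ k) with hφ
  have hφinj : ∀ i ≤ 3 * n + 6, ∀ j ≤ 3 * n + 6, φ i = φ j → i = j := by
    intro i hi j hj h
    exact hinj i hi j hj (eq_of_blk_idx (by rw [hblk i hi, hblk j hj]) h)
  have hedge : ∀ i ≤ 3 * n + 6, ∀ j ≤ 3 * n + 6, IcmpP (ψ i) (ψ j) →
      Edg m (φ i) (φ j) ∧ φ i ≤ 3 * m + 6 ∧ φ j ≤ 3 * m + 6 := by
    intro i hi j hj h
    exact icmp_edge (hblk i hi) (hblk j hj) h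
  -- realness bounds
  have hreal : ∀ k ≤ 3 * n + 6, φ k ≤ 3 * m + 6 := by
    intro k hk
    rcases Nat.lt_or_ge k (3 * n + 6) with h | h
    · exact (hedge k (by omega) (k + 1) (by omega) (hcons k h)).2.1
    · have hk6 : k = 3 * n + 6 := by omega
      subst hk6
      exact (hedge (3 * n + 4) (by omega) (3 * n + 6) (by omega) htop).2.2
  -- the two triangles
  have e01 : Edg m (φ 0) (φ 1) := (hedge 0 (by omega) 1 (by omega) (hcons 0 (by omega))).1
  have e12 : Edg m (φ 1) (φ 2) := (hedge 1 (by omega) 2 (by omega) (hcons 1 (by omega))).1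
  have e02 : Edg m (φ 0) (φ 2) := (hedge 0 (by omega) 2 (by omega) hzt).1
  have f01 : Edg m (φ (3 * n + 4)) (φ (3 * n + 5)) := by
    have := (hedge (3 * n + 4) (by omega) (3 * n + 5) (by omega) (hcons (3 * n + 4) (by omega))).1
    simpa using this
  have f12 : Edg m (φ (3 * n + 5)) (φ (3 * n + 6)) := by
    have := (hedge (3 * n + 5) (by omega) (3 * n + 6) (by omega) (hcons (3 * n + 5) (by omega))).1
    simpa using this
  have f02 : Edg m (φ (3 * n + 4)) (φ (3 * n + 6)) :=
    (hedge (3 * n + 4) (by omega) (3 * n + 6) (by omega) htop).1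
  have t1 := tri_main e01 e12 e02
  have t2 := tri_main f01 f12 f02
  -- distinctness of the six values
  have hne : ∀ i ≤ 3 * n + 6, ∀ j ≤ 3 * n + 6, i ≠ j → φ i ≠ φ j := by
    intro i hi j hj hij h
    exact hij (hφinj i hi j hj h)
  -- counting: n ≤ m
  have hcount : n ≤ m := by
    have hsub : (Finset.range (3 * n + 7)).image φ ⊆ Finset.range (3 * m + 7) := by
      intro x hx
      simp only [Finset.mem_image, Finset.mem_range] at hx ⊢
      obtain ⟨k, hk, rfl⟩ := hx
      have := hreal k (by omega)
      omega
    have hcard : ((Finset.range (3 * n + 7)).image φ).card = 3 * n + 7 := by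
      rw [Finset.card_image_of_injOn, Finset.card_range]
      intro i hi j hj h
      simp only [Finset.mem_coe, Finset.mem_range] at hi hj
      exact hφinj i (by omega) j (by omega) h
    have := Finset.card_le_card hsub
    rw [hcard, Finset.card_range] at this
    omega
  -- case analysis
  rcases t1 with ⟨⟨l0, l1, l2⟩, hK1⟩ | ⟨h0, h1, h2⟩
  · rcases t2 with ⟨⟨k0, k1, k2⟩, -⟩ | ⟨g0, g1, g2⟩
    · -- both triangles low: six distinct values ≤ 2, impossible
      exfalso
      have d1 := hne 0 (by omega) 1 (by omega) (by omega)
      have d2 := hne 0 (by omega) 2 (by omega) (by omega)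
      have d3 := hne 1 (by omega) 2 (by omega) (by omega)
      have d4 := hne 0 (by omega) (3 * n + 4) (by omega) (by omega)
      have d5 := hne 0 (by omega) (3 * n + 5) (by omega) (by omega)
      have d6 := hne 0 (by omega) (3 * n + 6) (by omega) (by omega)
      have d7 := hne 1 (by omega) (3 * n + 4) (by omega) (by omega)
      have d8 := hne 1 (by omega) (3 * n + 5) (by omega) (by omega)
      have d9 := hne 1 (by omega) (3 * n + 6) (by omega) (by omega)
      have d10 := hne 2 (by omega) (3 * n + 4) (by omega) (by omega)
      have d11 := hne 2 (by omega) (3 * n + 5) (by omega) (by omega)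
      have d12 := hne 2 (by omega) (3 * n + 6) (by omega) (by omega)
      have d13 := hne (3 * n + 4) (by omega) (3 * n + 5) (by omega) (by omega)
      have d14 := hne (3 * n + 4) (by omega) (3 * n + 6) (by omega) (by omega)
      have d15 := hne (3 * n + 5) (by omega) (3 * n + 6) (by omega) (by omega)
      omega
    · -- low bottom triangle, high top triangle : ascend
      -- exact values of the low triangle
      have d1 := hne 0 (by omega) 1 (by omega) (by omega)
      have d2 := hne 0 (by omega) 2 (by omega) (by omega)
      have d3 := hne 1 (by omega) 2 (by omega) (by omega)
      have d13 := hne (3 * n + 4) (by omega) (3 * n + 5) (by omega) (by omega)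
      have d14 := hne (3 * n + 4) (by omega) (3 * n + 6) (by omega) (by omega)
      have d15 := hne (3 * n + 5) (by omega) (3 * n + 6) (by omega) (by omega)
      have r4 := hreal (3 * n + 4) (by omega)
      have r5 := hreal (3 * n + 5) (by omega)
      have r6 := hreal (3 * n + 6) (by omega)
      -- low values are exactly {0,1,2}; high values exactly {3m+4,3m+5,3m+6}
      have hlow : ∀ t, t ≤ 2 → φ 0 = t ∨ φ 1 = t ∨ φ 2 = t := by intro t ht; omega
      have hhigh : ∀ t, 3 * m + 4 ≤ t → t ≤ 3 * m + 6 →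
          φ (3 * n + 4) = t ∨ φ (3 * n + 5) = t ∨ φ (3 * n + 6) = t := by intro t h1t h2t; omega
      have ascend : ∀ k, 2 ≤ k → k ≤ 3 * n + 4 → φ k ≤ k := by
        intro k
        induction k with
        | zero => omega
        | succ k ih =>
          intro h2k hk4
          rcases Nat.lt_or_ge k 2 with hk2 | hk2
          · -- k+1 = 2
            have : k + 1 = 2 := by omega
            rw [this]; exact l2
          · have hkk := ih hk2 (by omega)
            have hE := (hedge k (by omega) (k + 1) (by omega) (hcons k (by omega))).1
            rcases hE with ⟨ho, hp⟩ | ⟨ho, hp⟩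
            · rcases hp with hp | ⟨hp1, hp2, -⟩ | ⟨hp1, hp2⟩
              · omega
              · -- bottom chord used in the middle: impossible
                exfalso
                rcases hlow (φ k) (by omega) with h | h | h
                · have := hφinj k (by omega) 0 (by omega) h.symm; omega
                · have := hφinj k (by omega) 1 (by omega) h.symm; omega
                · have hk22 : k = 2 := hφinj k (by omega) 2 (by omega) h.symm
                  rcases hlow (φ (k + 1)) (by omega) with h' | h' | h'
                  · have := hφinj (k + 1) (by omega) 0 (by omega) h'.symm; omega
                  · have := hφinj (k + 1) (by omega) 1 (by omega) h'.symm; omega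
                  · have := hφinj (k + 1) (by omega) 2 (by omega) h'.symm; omega
              · -- top chord used too early: impossible
                exfalso
                rcases hhigh (φ k) (by omega) (by omega) with h | h | h
                · have := hφinj k (by omega) (3 * n + 4) (by omega) h.symm; omega
                · have := hφinj k (by omega) (3 * n + 5) (by omega) h.symm; omega
                · have := hφinj k (by omega) (3 * n + 6) (by omega) h.symm; omega
            · have := pedge_lt hp; omega
      have hfin := ascend (3 * n + 4) (by omega) (by omega)
      have hmn : m = n := by omega
      rw [← hmn]; exact hK1
  · rcases t2 with ⟨⟨k0, k1, k2⟩, hK2⟩ | ⟨g0, g1, g2⟩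
    · -- high bottom triangle, low top triangle : descend
      have d1 := hne 0 (by omega) 1 (by omega) (by omega)
      have d2 := hne 0 (by omega) 2 (by omega) (by omega)
      have d3 := hne 1 (by omega) 2 (by omega) (by omega)
      have d13 := hne (3 * n + 4) (by omega) (3 * n + 5) (by omega) (by omega)
      have d14 := hne (3 * n + 4) (by omega) (3 * n + 6) (by omega) (by omega)
      have d15 := hne (3 * n + 5) (by omega) (3 * n + 6) (by omega) (by omega)
      have r0 := hreal 0 (by omega)
      have r1 := hreal 1 (by omega)
      have r2 := hreal 2 (by omega)
      have hhigh : ∀ t, 3 * m + 4 ≤ t → t ≤ 3 * m + 6 → φ 0 = t ∨ φ 1 = t ∨ φ 2 = t := by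
        intro t h1t h2t; omega
      have hlow : ∀ t, t ≤ 2 → φ (3 * n + 4) = t ∨ φ (3 * n + 5) = t ∨ φ (3 * n + 6) = t := by
        intro t ht; omega
      have descend : ∀ k, 2 ≤ k → k ≤ 3 * n + 4 → 3 * m + 6 ≤ φ k + k := by
        intro k
        induction k with
        | zero => omega
        | succ k ih =>
          intro h2k hk4
          rcases Nat.lt_or_ge k 2 with hk2 | hk2
          · have : k + 1 = 2 := by omega
            rw [this]; omega
          · have hkk := ih hk2 (by omega)
            have hE := (hedge k (by omega) (k + 1) (by omega) (hcons k (by omega))).1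
            rcases hE with ⟨ho, hp⟩ | ⟨ho, hp⟩
            · rcases hp with hp | ⟨hp1, hp2, -⟩ | ⟨hp1, hp2⟩
              · omega
              · -- bottom chord: φ k = 0, but small values live at the top indices
                exfalso
                rcases hlow (φ k) (by omega) with h | h | h
                · have := hφinj k (by omega) (3 * n + 4) (by omega) h.symm; omega
                · have := hφinj k (by omega) (3 * n + 5) (by omega) h.symm; omega
                · have := hφinj k (by omega) (3 * n + 6) (by omega) h.symm; omega
              · -- top chord: φ k = 3m+4 lives at indices ≤ 2, so k = 2, then φ(k+1)=3m+6 clashes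
                exfalso
                rcases hhigh (φ k) (by omega) (by omega) with h | h | h
                · have := hφinj k (by omega) 0 (by omega) h.symm; omega
                · have := hφinj k (by omega) 1 (by omega) h.symm; omega
                · have hk22 : k = 2 := hφinj k (by omega) 2 (by omega) h.symm
                  rcases hhigh (φ (k + 1)) (by omega) (by omega) with h' | h' | h'
                  · have := hφinj (k + 1) (by omega) 0 (by omega) h'.symm; omega
                  · have := hφinj (k + 1) (by omega) 1 (by omega) h'.symm; omega
                  · have := hφinj (k + 1) (by omega) 2 (by omega) h'.symm; omega
            · rcases hp with hp | ⟨hp1, hp2, -⟩ | ⟨hp1, hp2⟩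
              · omega
              · exfalso
                rcases hlow (φ (k + 1)) (by omega) with h | h | h
                · have := hφinj (k + 1) (by omega) (3 * n + 4) (by omega) h.symm; omega
                · have := hφinj (k + 1) (by omega) (3 * n + 5) (by omega) h.symm; omega
                · have := hφinj (k + 1) (by omega) (3 * n + 6) (by omega) h.symm; omega
              · exfalso
                rcases hhigh (φ k) (by omega) (by omega) with h | h | h
                · have := hφinj k (by omega) 0 (by omega) h.symm; omega
                · have := hφinj k (by omega) 1 (by omega) h.symm; omega
                · have hk22 : k = 2 := hφinj k (by omega) 2 (by omega) h.symm
                  rcases hhigh (φ (k + 1)) (by omega) (by omega) with h' | h' | h'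
                  · have := hφinj (k + 1) (by omega) 0 (by omega) h'.symm; omega
                  · have := hφinj (k + 1) (by omega) 1 (by omega) h'.symm; omega
                  · have := hφinj (k + 1) (by omega) 2 (by omega) h'.symm; omega
            
      have hfin := descend (3 * n + 4) (by omega) (by omega)
      have hmn : m = n := by omega
      rw [← hmn]; exact hK2
    · -- both triangles high: six distinct values in a 3-element interval, impossible
      exfalso
      have d1 := hne 0 (by omega) 1 (by omega) (by omega)
      have d2 := hne 0 (by omega) 2 (by omega) (by omega)
      have d3 := hne 1 (by omega) 2 (by omega) (by omega)
      have d4 := hne 0 (by omega) (3 * n + 4) (by omega) (by omega)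
      have d5 := hne 0 (by omega) (3 * n + 5) (by omega) (by omega)
      have d6 := hne 0 (by omega) (3 * n + 6) (by omega) (by omega)
      have d7 := hne 1 (by omega) (3 * n + 4) (by omega) (by omega)
      have d8 := hne 1 (by omega) (3 * n + 5) (by omega) (by omega)
      have d9 := hne 1 (by omega) (3 * n + 6) (by omega) (by omega)
      have d10 := hne 2 (by omega) (3 * n + 4) (by omega) (by omega)
      have d11 := hne 2 (by omega) (3 * n + 5) (by omega) (by omega)
      have d12 := hne 2 (by omega) (3 * n + 6) (by omega) (by omega)
      have d13 := hne (3 * n + 4) (by omega) (3 * n + 5) (by omega) (by omega)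
      have d14 := hne (3 * n + 4) (by omega) (3 * n + 6) (by omega) (by omega)
      have d15 := hne (3 * n + 5) (by omega) (3 * n + 6) (by omega) (by omega)
      have r0 := hreal 0 (by omega)
      have r1 := hreal 1 (by omega)
      have r2 := hreal 2 (by omega)
      have r4 := hreal (3 * n + 4) (by omega)
      have r5 := hreal (3 * n + 5) (by omega)
      have r6 := hreal (3 * n + 6) (by omega)
      omega

open Nat.Partrec (Code)
open Nat.Partrec.Code

theorem diag_partrec : Partrec fun n : ℕ => (Denumerable.ofNat Code n).eval n :=
  eval_part.comp (Computable.ofNat _) Computable.id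

theorem halting_re : REPred (· ∈ HaltingSet) := diag_partrec.dom_re

theorem dom_iff_evaln {c : Code} {z : ℕ} :
    (eval c z).Dom ↔ ∃ s, (evaln s c z).isSome := by
  rw [Part.dom_iff_mem]
  constructor
  · rintro ⟨x, hx⟩
    obtain ⟨k, hk⟩ := evaln_complete.1 hx
    exact ⟨k, by rw [Option.mem_def] at hk; simp [hk]⟩
  · rintro ⟨s, hs⟩
    obtain ⟨x, hx⟩ := Option.isSome_iff_exists.1 hs
    exact ⟨x, evaln_sound (by rw [Option.mem_def]; exact hx)⟩

theorem halting_not_computable : ¬ ComputablePred (· ∈ HaltingSet) := by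
  intro h
  have h1 : REPred fun n : ℕ => ¬ (n ∈ HaltingSet) := (h.not).to_re
  have h2 : Partrec fun n : ℕ =>
      (Part.assert (¬ (n ∈ HaltingSet)) fun _ => Part.some ()).map fun _ => 0 :=
    Partrec.map h1 ((Computable.const 0).comp Computable.fst).to₂
  have h3 := Partrec.nat_iff.1 h2
  obtain ⟨c, hc⟩ := exists_code.1 h3
  by_cases hmem : (Encodable.encode c) ∈ HaltingSet
  · have hd : ((Denumerable.ofNat Code (Encodable.encode c)).eval (Encodable.encode c)).Dom :=
      hmem
    rw [Denumerable.ofNat_encode, hc] at hd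
    have hd' : (Part.map (fun _ : Unit => 0)
        (Part.assert (¬ (Encodable.encode c ∈ HaltingSet)) fun _ => Part.some ())).Dom := hd
    rw [Part.assert_neg (not_not_intro hmem)] at hd'
    simp at hd'
  · apply hmem
    show ((Denumerable.ofNat Code (Encodable.encode c)).eval (Encodable.encode c)).Dom
    rw [Denumerable.ofNat_encode, hc]
    show (Part.map (fun _ : Unit => 0)
        (Part.assert (¬ (Encodable.encode c ∈ HaltingSet)) fun _ => Part.some ())).Dom
    rw [Part.assert_pos hmem]
    simp

theorem re_of_exists_bool {B : ℕ → ℕ → Bool} (hB : Computable₂ B) :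
    REPred fun n : ℕ => ∃ w, B n w = true := by
  have hf : Partrec fun n : ℕ => Nat.rfind fun w => (Part.some (B n w) : Part Bool) :=
    Partrec.rfind hB.partrec₂
  apply hf.dom_re.of_eq
  intro n
  refine (Nat.rfind_dom (p := fun w => (Part.some (B n w) : Part Bool))).trans ?_
  constructor
  · rintro ⟨w, hw, -⟩
    exact ⟨w, by simpa [Part.mem_some_iff] using hw⟩
  · rintro ⟨w, hw⟩
    exact ⟨w, by simp [Part.mem_some_iff, hw], fun {m} _ => trivial⟩

/-! ### c.e.-ness of the order -/

def lexB (x : ℕ) : Bool :=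
  decide (x.unpair.1.unpair.1 < x.unpair.2.unpair.1) ||
    (decide (x.unpair.1.unpair.1 = x.unpair.2.unpair.1) &&
      decide (x.unpair.1.unpair.2 < x.unpair.2.unpair.2))

def efixB (x : ℕ) : Bool :=
  decide (x.unpair.1.unpair.1 = x.unpair.2.unpair.1) &&
    decide (x.unpair.2.unpair.2 ≤ 3 * x.unpair.1.unpair.1 + 6) &&
    (decide (x.unpair.2.unpair.2 = x.unpair.1.unpair.2 + 1) ||
      (decide (x.unpair.1.unpair.2 = 3 * x.unpair.1.unpair.1 + 4) &&
        decide (x.unpair.2.unpair.2 = 3 * x.unpair.1.unpair.1 + 6)))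

def ztB (x : ℕ) : Bool :=
  decide (x.unpair.1.unpair.1 = x.unpair.2.unpair.1) &&
    decide (x.unpair.1.unpair.2 = 0) && decide (x.unpair.2.unpair.2 = 2)

def d1 (x : ℕ) : Bool :=
  decide (x.unpair.1 = x.unpair.2) || (lexB x && !efixB x && !ztB x)

def d2 (x : ℕ) : Bool := lexB x && !efixB x && ztB x

lemma pord_equiv {na ia nb ib : ℕ} {K : Prop}
    (L : Prop) (hL : L ↔ (na < nb ∨ (na = nb ∧ ia < ib))) :
    (L ∧ ¬(na = nb ∧ ib ≤ 3 * na + 6 ∧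
        (ib = ia + 1 ∨ (ia = 0 ∧ ib = 2 ∧ ¬K) ∨ (ia = 3 * na + 4 ∧ ib = 3 * na + 6)))) ↔
    ((L ∧ ¬(na = nb ∧ ib ≤ 3 * na + 6 ∧
        (ib = ia + 1 ∨ (ia = 3 * na + 4 ∧ ib = 3 * na + 6))) ∧
      ¬(na = nb ∧ ia = 0 ∧ ib = 2)) ∨
     ((L ∧ ¬(na = nb ∧ ib ≤ 3 * na + 6 ∧
        (ib = ia + 1 ∨ (ia = 3 * na + 4 ∧ ib = 3 * na + 6))) ∧
      (na = nb ∧ ia = 0 ∧ ib = 2)) ∧ K)) := by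
  constructor
  · rintro ⟨hl, he⟩
    by_cases hz : na = nb ∧ ia = 0 ∧ ib = 2
    · right
      refine ⟨⟨hl, ?_, hz⟩, ?_⟩
      · rintro ⟨e1, e2, e3⟩
        exact he ⟨e1, e2, by tauto⟩
      · by_contra hKn
        exact he ⟨hz.1, by omega, Or.inr (Or.inl ⟨hz.2.1, hz.2.2, hKn⟩)⟩
    · left
      refine ⟨hl, ?_, hz⟩
      rintro ⟨e1, e2, e3⟩
      exact he ⟨e1, e2, by tauto⟩
  · rintro (⟨hl, he, hz⟩ | ⟨⟨hl, he, hz⟩, hK⟩)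
    · refine ⟨hl, ?_⟩
      rintro ⟨e1, e2, e3⟩
      rcases e3 with e3 | e3 | e3
      · exact he ⟨e1, e2, Or.inl e3⟩
      · exact hz ⟨e1, e3.1, e3.2.1⟩
      · exact he ⟨e1, e2, Or.inr e3⟩
    · refine ⟨hl, ?_⟩
      rintro ⟨e1, e2, e3⟩
      rcases e3 with e3 | e3 | e3
      · exact he ⟨e1, e2, Or.inl e3⟩
      · exact e3.2.2 hK
      · exact he ⟨e1, e2, Or.inr e3⟩

lemma lexB_iff (x : ℕ) : lexB x = true ↔
    (x.unpair.1.unpair.1 < x.unpair.2.unpair.1 ∨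
      (x.unpair.1.unpair.1 = x.unpair.2.unpair.1 ∧ x.unpair.1.unpair.2 < x.unpair.2.unpair.2)) := by
  simp [lexB]

lemma efixB_iff (x : ℕ) : efixB x = true ↔
    (x.unpair.1.unpair.1 = x.unpair.2.unpair.1 ∧
      x.unpair.2.unpair.2 ≤ 3 * x.unpair.1.unpair.1 + 6 ∧
      (x.unpair.2.unpair.2 = x.unpair.1.unpair.2 + 1 ∨
        (x.unpair.1.unpair.2 = 3 * x.unpair.1.unpair.1 + 4 ∧
          x.unpair.2.unpair.2 = 3 * x.unpair.1.unpair.1 + 6))) := by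
  simp [efixB, and_assoc]

lemma ztB_iff (x : ℕ) : ztB x = true ↔
    (x.unpair.1.unpair.1 = x.unpair.2.unpair.1 ∧
      x.unpair.1.unpair.2 = 0 ∧ x.unpair.2.unpair.2 = 2) := by
  simp [ztB, and_assoc]

lemma d1_iff (x : ℕ) : d1 x = true ↔
    (x.unpair.1 = x.unpair.2 ∨
      (lexB x = true ∧ ¬(efixB x = true) ∧ ¬(ztB x = true))) := by
  simp [d1, and_assoc]

lemma d2_iff (x : ℕ) : d2 x = true ↔
    (lexB x = true ∧ ¬(efixB x = true) ∧ ztB x = true) := by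
  simp [d2, and_assoc]

lemma pord_iff_bool (x : ℕ) :
    Pord x.unpair.1 x.unpair.2 ↔
      (d1 x = true ∨ (d2 x = true ∧ x.unpair.1.unpair.1 ∈ HaltingSet)) := by
  have hP : Pord x.unpair.1 x.unpair.2 ↔
      (x.unpair.1 = x.unpair.2 ∨
        (lexB x = true ∧ ¬(x.unpair.1.unpair.1 = x.unpair.2.unpair.1 ∧
          x.unpair.2.unpair.2 ≤ 3 * x.unpair.1.unpair.1 + 6 ∧
          (x.unpair.2.unpair.2 = x.unpair.1.unpair.2 + 1 ∨
            (x.unpair.1.unpair.2 = 0 ∧ x.unpair.2.unpair.2 = 2 ∧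
              ¬(x.unpair.1.unpair.1 ∈ HaltingSet)) ∨
            (x.unpair.1.unpair.2 = 3 * x.unpair.1.unpair.1 + 4 ∧
              x.unpair.2.unpair.2 = 3 * x.unpair.1.unpair.1 + 6))))) := by
    unfold Pord LexLt EK pedge blk idx
    rw [lexB_iff]
  rw [hP, d1_iff, d2_iff,
    pord_equiv (K := x.unpair.1.unpair.1 ∈ HaltingSet) (lexB x = true) (lexB_iff x)]
  rw [efixB_iff, ztB_iff]
  exact or_assoc.symm

section PrimrecStuff

open Primrec

private lemma hu1 : Primrec fun x : ℕ => x.unpair.1 := fst.comp Primrec.unpair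
private lemma hu2 : Primrec fun x : ℕ => x.unpair.2 := snd.comp Primrec.unpair
private lemma h11 : Primrec fun x : ℕ => x.unpair.1.unpair.1 := hu1.comp hu1
private lemma h12 : Primrec fun x : ℕ => x.unpair.1.unpair.2 := hu2.comp hu1
private lemma h21 : Primrec fun x : ℕ => x.unpair.2.unpair.1 := hu1.comp hu2
private lemma h22 : Primrec fun x : ℕ => x.unpair.2.unpair.2 := hu2.comp hu2

private lemma hbor : Primrec₂ (· || ·) := Primrec.dom_bool₂ _
private lemma hband : Primrec₂ (· && ·) := Primrec.dom_bool₂ _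

lemma primrec_lexB : Primrec lexB := by
  unfold lexB
  exact hbor.comp (Primrec.nat_lt.comp h11 h21).decide
    (hband.comp (Primrec.eq.comp h11 h21).decide (Primrec.nat_lt.comp h12 h22).decide)

private lemma harith1 : Primrec fun x : ℕ => 3 * x.unpair.1.unpair.1 + 6 :=
  Primrec.nat_add.comp (Primrec.nat_mul.comp (const 3) h11) (const 6)

private lemma harith2 : Primrec fun x : ℕ => 3 * x.unpair.1.unpair.1 + 4 :=
  Primrec.nat_add.comp (Primrec.nat_mul.comp (const 3) h11) (const 4)

private lemma harith3 : Primrec fun x : ℕ => x.unpair.1.unpair.2 + 1 :=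
  Primrec.nat_add.comp h12 (const 1)

lemma primrec_efixB : Primrec efixB := by
  unfold efixB
  exact hband.comp
    (hband.comp (Primrec.eq.comp h11 h21).decide (Primrec.nat_le.comp h22 harith1).decide)
    (hbor.comp (Primrec.eq.comp h22 harith3).decide
      (hband.comp (Primrec.eq.comp h12 harith2).decide (Primrec.eq.comp h22 harith1).decide))

lemma primrec_ztB : Primrec ztB := by
  unfold ztB
  exact hband.comp
    (hband.comp (Primrec.eq.comp h11 h21).decide (Primrec.eq.comp h12 (const 0)).decide)
    (Primrec.eq.comp h22 (const 2)).decide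

lemma primrec_d1 : Primrec d1 := by
  unfold d1
  exact hbor.comp (Primrec.eq.comp hu1 hu2).decide
    (hband.comp (hband.comp primrec_lexB (Primrec.not.comp primrec_efixB))
      (Primrec.not.comp primrec_ztB))

lemma primrec_d2 : Primrec d2 := by
  unfold d2
  exact hband.comp (hband.comp primrec_lexB (Primrec.not.comp primrec_efixB)) primrec_ztB

def bp (c : Code) (x w : ℕ) : Bool :=
  d1 x || (d2 x && (evaln w c x.unpair.1.unpair.1).isSome)

lemma primrec_bp (c : Code) : Primrec₂ (bp c) := by
  have hEval : Primrec fun p : ℕ × ℕ => (evaln p.2 c p.1.unpair.1.unpair.1).isSome :=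
    Primrec.option_isSome.comp
      ((Nat.Partrec.Code.primrec_evaln).comp
        (Primrec.pair (Primrec.pair snd (const c)) (h11.comp fst)))
  exact hbor.comp (primrec_d1.comp fst) (hband.comp (primrec_d2.comp fst) hEval)

end PrimrecStuff

theorem pord_ce : REPred (fun x => x ∈ codedSet Pord) := by
  obtain ⟨cH, hcH⟩ := exists_code.1 (Partrec.nat_iff.1 diag_partrec)
  have hmem : ∀ n : ℕ, n ∈ HaltingSet ↔ ∃ s, (evaln s cH n).isSome := by
    intro n
    have h1 : (eval cH n).Dom ↔ (n ∈ HaltingSet) := by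
      rw [hcH]
      exact Iff.rfl
    rw [← h1]
    exact dom_iff_evaln
  have hB : Computable₂ (bp cH) := (primrec_bp cH).to_comp
  apply (re_of_exists_bool hB).of_eq
  intro x
  constructor
  · rintro ⟨w, hw⟩
    show Pord x.unpair.1 x.unpair.2
    rw [pord_iff_bool]
    have hw' : d1 x = true ∨ (d2 x = true ∧ (evaln w cH x.unpair.1.unpair.1).isSome = true) := by
      simpa [bp] using hw
    rcases hw' with h | ⟨h1, h2⟩
    · exact Or.inl h
    · exact Or.inr ⟨h1, (hmem _).2 ⟨w, h2⟩⟩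
  · intro hx
    have hx' := (pord_iff_bool x).1 hx
    rcases hx' with h | ⟨h1, h2⟩
    · exact ⟨0, by simp [bp, h]⟩
    · obtain ⟨s, hs⟩ := (hmem _).1 h2
      exact ⟨s, by simp [bp, h1, hs]⟩

/-! ### certificates from a co-c.e. copy -/

theorem primrec_list_all {α β : Type} [Primcodable α] [Primcodable β]
    {f : α → List β} {p : α → β → Bool} (hf : Primrec f) (hp : Primrec₂ p) :
    Primrec fun a => (f a).all (p a) := by
  have h2 : Primrec₂ fun (a : α) (x : β × Bool) => p a x.1 && x.2 :=
    hband.comp (hp.comp Primrec.fst (Primrec.fst.comp Primrec.snd))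
      (Primrec.snd.comp Primrec.snd)
  have h := Primrec.list_foldr hf (Primrec.const true) h2
  refine h.of_eq fun a => ?_
  generalize f a = l
  induction l with
  | nil => rfl
  | cons x xs ih => simp [← ih]

def icmpB (c : Code) (s u v : ℕ) : Bool :=
  (evaln s c (Nat.pair u v)).isSome && (evaln s c (Nat.pair v u)).isSome

lemma primrec_icmpB (c : Code) {γ : Type} [Primcodable γ] {S U V : γ → ℕ}
    (hS : Primrec S) (hU : Primrec U) (hV : Primrec V) :
    Primrec fun q => icmpB c (S q) (U q) (V q) := by
  unfold icmpB
  exact hband.comp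
    (Primrec.option_isSome.comp (Nat.Partrec.Code.primrec_evaln.comp
      (Primrec.pair (Primrec.pair hS (Primrec.const c)) (Primrec₂.natPair.comp hU hV))))
    (Primrec.option_isSome.comp (Nat.Partrec.Code.primrec_evaln.comp
      (Primrec.pair (Primrec.pair hS (Primrec.const c)) (Primrec₂.natPair.comp hV hU))))

def goodB (c : Code) (n w : ℕ) : Bool :=
  (decide ((Denumerable.ofNat (List ℕ) w.unpair.1).length = 3 * n + 7)) &&
  ((List.range (3 * n + 7)).all fun i => (List.range i).all fun j =>
      !decide ((Denumerable.ofNat (List ℕ) w.unpair.1).getD i 0 =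
        (Denumerable.ofNat (List ℕ) w.unpair.1).getD j 0)) &&
  ((List.range (3 * n + 6)).all fun k =>
      icmpB c w.unpair.2 ((Denumerable.ofNat (List ℕ) w.unpair.1).getD k 0)
        ((Denumerable.ofNat (List ℕ) w.unpair.1).getD (k + 1) 0)) &&
  icmpB c w.unpair.2 ((Denumerable.ofNat (List ℕ) w.unpair.1).getD 0 0)
    ((Denumerable.ofNat (List ℕ) w.unpair.1).getD 2 0) &&
  icmpB c w.unpair.2 ((Denumerable.ofNat (List ℕ) w.unpair.1).getD (3 * n + 4) 0)
    ((Denumerable.ofNat (List ℕ) w.unpair.1).getD (3 * n + 6) 0)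

lemma primrec_goodB (c : Code) : Primrec₂ (goodB c) := by
  have hl : Primrec fun p : ℕ × ℕ => Denumerable.ofNat (List ℕ) p.2.unpair.1 :=
    (Primrec.ofNat (List ℕ)).comp (hu1.comp Primrec.snd)
  have hst : Primrec fun p : ℕ × ℕ => p.2.unpair.2 := hu2.comp Primrec.snd
  have hn7 : Primrec fun p : ℕ × ℕ => 3 * p.1 + 7 :=
    Primrec.nat_add.comp (Primrec.nat_mul.comp (Primrec.const 3) Primrec.fst) (Primrec.const 7)
  have hn6 : Primrec fun p : ℕ × ℕ => 3 * p.1 + 6 :=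
    Primrec.nat_add.comp (Primrec.nat_mul.comp (Primrec.const 3) Primrec.fst) (Primrec.const 6)
  have hn4 : Primrec fun p : ℕ × ℕ => 3 * p.1 + 4 :=
    Primrec.nat_add.comp (Primrec.nat_mul.comp (Primrec.const 3) Primrec.fst) (Primrec.const 4)
  have hlen : Primrec fun p : ℕ × ℕ =>
      decide ((Denumerable.ofNat (List ℕ) p.2.unpair.1).length = 3 * p.1 + 7) :=
    (Primrec.eq.comp (Primrec.list_length.comp hl) hn7).decide
  -- nodup component
  have hLi : Primrec fun q : (ℕ × ℕ) × ℕ => Denumerable.ofNat (List ℕ) q.1.2.unpair.1 :=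
    (Primrec.ofNat (List ℕ)).comp (hu1.comp (Primrec.snd.comp Primrec.fst))
  have hinner2 : Primrec₂ fun (q : (ℕ × ℕ) × ℕ) (j : ℕ) =>
      !decide ((Denumerable.ofNat (List ℕ) q.1.2.unpair.1).getD q.2 0 =
        (Denumerable.ofNat (List ℕ) q.1.2.unpair.1).getD j 0) :=
    Primrec.not.comp ((Primrec.eq.comp
      ((Primrec.list_getD 0).comp (hLi.comp Primrec.fst) (Primrec.snd.comp Primrec.fst))
      ((Primrec.list_getD 0).comp (hLi.comp Primrec.fst) Primrec.snd)).decide)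
  have hinner : Primrec fun q : (ℕ × ℕ) × ℕ =>
      (List.range q.2).all fun j =>
        !decide ((Denumerable.ofNat (List ℕ) q.1.2.unpair.1).getD q.2 0 =
          (Denumerable.ofNat (List ℕ) q.1.2.unpair.1).getD j 0) :=
    primrec_list_all (Primrec.list_range.comp Primrec.snd) hinner2
  have hnodup : Primrec fun p : ℕ × ℕ =>
      (List.range (3 * p.1 + 7)).all fun i => (List.range i).all fun j =>
        !decide ((Denumerable.ofNat (List ℕ) p.2.unpair.1).getD i 0 =
          (Denumerable.ofNat (List ℕ) p.2.unpair.1).getD j 0) :=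
    primrec_list_all (Primrec.list_range.comp hn7) hinner
  -- path component
  have hkpred : Primrec fun q : (ℕ × ℕ) × ℕ =>
      icmpB c (q.1.2.unpair.2) ((Denumerable.ofNat (List ℕ) q.1.2.unpair.1).getD q.2 0)
        ((Denumerable.ofNat (List ℕ) q.1.2.unpair.1).getD (q.2 + 1) 0) :=
    primrec_icmpB c (hu2.comp (Primrec.snd.comp Primrec.fst))
      ((Primrec.list_getD 0).comp hLi Primrec.snd)
      ((Primrec.list_getD 0).comp hLi
        (Primrec.nat_add.comp Primrec.snd (Primrec.const 1)))
  have hpath : Primrec fun p : ℕ × ℕ =>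
      (List.range (3 * p.1 + 6)).all fun k =>
        icmpB c p.2.unpair.2 ((Denumerable.ofNat (List ℕ) p.2.unpair.1).getD k 0)
          ((Denumerable.ofNat (List ℕ) p.2.unpair.1).getD (k + 1) 0) :=
    primrec_list_all (Primrec.list_range.comp hn6) hkpred
  have hch1 : Primrec fun p : ℕ × ℕ =>
      icmpB c p.2.unpair.2 ((Denumerable.ofNat (List ℕ) p.2.unpair.1).getD 0 0)
        ((Denumerable.ofNat (List ℕ) p.2.unpair.1).getD 2 0) :=
    primrec_icmpB c hst ((Primrec.list_getD 0).comp hl (Primrec.const 0))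
      ((Primrec.list_getD 0).comp hl (Primrec.const 2))
  have hch2 : Primrec fun p : ℕ × ℕ =>
      icmpB c p.2.unpair.2 ((Denumerable.ofNat (List ℕ) p.2.unpair.1).getD (3 * p.1 + 4) 0)
        ((Denumerable.ofNat (List ℕ) p.2.unpair.1).getD (3 * p.1 + 6) 0) :=
    primrec_icmpB c hst ((Primrec.list_getD 0).comp hl hn4)
      ((Primrec.list_getD 0).comp hl hn6)
  exact hband.comp (hband.comp (hband.comp (hband.comp hlen hnodup) hpath) hch1) hch2

lemma goodB_iff (c : Code) (n w : ℕ) :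
    goodB c n w = true ↔
      ((Denumerable.ofNat (List ℕ) w.unpair.1).length = 3 * n + 7 ∧
       (∀ i < 3 * n + 7, ∀ j < i,
          (Denumerable.ofNat (List ℕ) w.unpair.1).getD i 0 ≠
            (Denumerable.ofNat (List ℕ) w.unpair.1).getD j 0) ∧
       (∀ k < 3 * n + 6,
          icmpB c w.unpair.2 ((Denumerable.ofNat (List ℕ) w.unpair.1).getD k 0)
            ((Denumerable.ofNat (List ℕ) w.unpair.1).getD (k + 1) 0) = true) ∧
       icmpB c w.unpair.2 ((Denumerable.ofNat (List ℕ) w.unpair.1).getD 0 0)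
         ((Denumerable.ofNat (List ℕ) w.unpair.1).getD 2 0) = true ∧
       icmpB c w.unpair.2 ((Denumerable.ofNat (List ℕ) w.unpair.1).getD (3 * n + 4) 0)
         ((Denumerable.ofNat (List ℕ) w.unpair.1).getD (3 * n + 6) 0) = true) := by
  simp [goodB, List.all_eq_true, List.mem_range, Bool.and_eq_true, and_assoc]

lemma evaln_isSome_mono {c : Code} {s s' z : ℕ} (hss : s ≤ s')
    (h : (evaln s c z).isSome = true) : (evaln s' c z).isSome = true := by
  obtain ⟨x, hx⟩ := Option.isSome_iff_exists.1 h
  have hm := evaln_mono hss (show x ∈ evaln s c z from hx)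
  exact Option.isSome_iff_exists.2 ⟨x, hm⟩

lemma exists_stage {c : Code} (zs : List ℕ)
    (h : ∀ z ∈ zs, ∃ s, (evaln s c z).isSome = true) :
    ∃ s, ∀ z ∈ zs, (evaln s c z).isSome = true := by
  induction zs with
  | nil => exact ⟨0, by simp⟩
  | cons z zs ih =>
    obtain ⟨s1, hs1⟩ := ih fun t ht => h t (List.mem_cons_of_mem _ ht)
    obtain ⟨s2, hs2⟩ := h z List.mem_cons_self
    refine ⟨max s1 s2, ?_⟩
    intro t ht
    rcases List.mem_cons.1 ht with rfl | ht
    · exact evaln_isSome_mono (le_max_right _ _) hs2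
    · exact evaln_isSome_mono (le_max_left _ _) (hs1 t ht)

lemma icmp_pattern {n i j : ℕ} (hn : True) (hj : j ≤ 3 * n + 6) (hp : pedge n i j) :
    IcmpP (Nat.pair n i) (Nat.pair n j) := by
  apply icmpP_iff.2
  left
  constructor
  · right
    constructor
    · show (Nat.pair n i).unpair.1 = (Nat.pair n j).unpair.1
      simp [Nat.unpair_pair]
    · show (Nat.pair n i).unpair.2 < (Nat.pair n j).unpair.2
      simp only [Nat.unpair_pair]
      exact pedge_lt hp
  · refine ⟨?_, ?_, ?_⟩
    · show (Nat.pair n i).unpair.1 = (Nat.pair n j).unpair.1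
      simp [Nat.unpair_pair]
    · show (Nat.pair n j).unpair.2 ≤ 3 * (Nat.pair n i).unpair.1 + 6
      simpa [Nat.unpair_pair] using hj
    · show pedge ((Nat.pair n i).unpair.1) ((Nat.pair n i).unpair.2) ((Nat.pair n j).unpair.2)
      simpa [Nat.unpair_pair] using hp

theorem kbar_re (Q : ℕ → ℕ → Prop) (hQco : REPred (fun x => x ∉ codedSet Q))
    (f : ℕ → ℕ) (hfbij : Function.Bijective f)
    (hfiso : ∀ a b, Pord a b ↔ Q (f a) (f b)) :
    REPred fun n : ℕ => ¬ (n ∈ HaltingSet) := by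
  classical
  have hpart : Partrec fun z : ℕ =>
      (Part.assert (z ∉ codedSet Q) fun _ => Part.some ()).map fun _ => (0 : ℕ) :=
    Partrec.map hQco ((Computable.const 0).comp Computable.fst).to₂
  obtain ⟨c, hc⟩ := exists_code.1 (Partrec.nat_iff.1 hpart)
  have hcdom : ∀ z : ℕ, z ∉ codedSet Q ↔ ∃ s, (evaln s c z).isSome = true := by
    intro z
    have h1 : (eval c z).Dom ↔ z ∉ codedSet Q := by
      rw [hc]
      show (Part.map _ (Part.assert _ _)).Dom ↔ _
      by_cases h : z ∉ codedSet Q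
      · rw [Part.assert_pos h]
        simp [h]
      · rw [Part.assert_neg h]
        simp [h]
    rw [← h1]
    exact dom_iff_evaln
  have hB : Computable₂ (goodB c) := (primrec_goodB c).to_comp
  apply (re_of_exists_bool hB).of_eq
  intro n
  constructor
  · -- soundness of the certificate
    rintro ⟨w, hw⟩
    rw [goodB_iff] at hw
    obtain ⟨hlen, hnd, hpath, hchord1, hchord2⟩ := hw
    set l : List ℕ := Denumerable.ofNat (List ℕ) w.unpair.1 with hldef
    set s : ℕ := w.unpair.2 with hsdef
    have hg : ∀ y, f ((hfbij.2 y).choose) = y := fun y => (hfbij.2 y).choose_spec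
    set g : ℕ → ℕ := fun y => (hfbij.2 y).choose with hgdef
    have hgf : ∀ y, f (g y) = y := hg
    have hicmp : ∀ u v : ℕ, icmpB c s u v = true → IcmpP (g u) (g v) := by
      intro u v huv
      rw [icmpB, Bool.and_eq_true] at huv
      obtain ⟨h1, h2⟩ := huv
      have q1 : Nat.pair u v ∉ codedSet Q := (hcdom _).2 ⟨s, h1⟩
      have q2 : Nat.pair v u ∉ codedSet Q := (hcdom _).2 ⟨s, h2⟩
      have nq1 : ¬ Q u v := by simpa [codedSet] using q1
      have nq2 : ¬ Q v u := by simpa [codedSet] using q2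
      constructor
      · intro hp
        exact nq1 (by simpa [hgf] using (hfiso _ _).1 hp)
      · intro hp
        exact nq2 (by simpa [hgf] using (hfiso _ _).1 hp)
    apply main_combinatorial (ψ := fun k => g (l.getD k 0))
    · intro i hi j hj hij
      have huv : l.getD i 0 = l.getD j 0 := by
        have := congrArg f hij
        simpa [hgf] using this
      by_contra hne
      rcases Nat.lt_or_ge i j with hlt | hge
      · exact (hnd j (by omega) i hlt) huv.symm
      · exact (hnd i (by omega) j (by omega)) huv
    · intro k hk
      exact hicmp _ _ (hpath k hk)
    · exact hicmp _ _ hchord1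
    · exact hicmp _ _ hchord2
  · -- completeness of the certificate
    intro hn
    set F : ℕ → ℕ := fun k => f (Nat.pair n k) with hF
    set l : List ℕ := (List.range (3 * n + 7)).map F with hldef
    have hlget : ∀ k, k < 3 * n + 7 → l.getD k 0 = F k := by
      intro k hk
      rw [hldef]
      simp [List.getD_eq_getElem?_getD, List.getElem?_map, List.getElem?_range, hk]
    have hFinj : ∀ i j : ℕ, F i = F j → i = j := by
      intro i j hij
      have h1 := hfbij.1 hij
      have h2 := congrArg (fun t => t.unpair.2) h1
      simpa [Nat.unpair_pair] using h2
    have hQpair : ∀ i j : ℕ, i < j → j ≤ 3 * n + 6 → pedge n i j →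
        (Nat.pair (F i) (F j)) ∉ codedSet Q ∧ (Nat.pair (F j) (F i)) ∉ codedSet Q := by
      intro i j hij hj hp
      have hic : IcmpP (Nat.pair n i) (Nat.pair n j) := icmp_pattern trivial hj hp
      obtain ⟨h1, h2⟩ := hic
      constructor
      · intro hmem
        have : Q (F i) (F j) := by simpa [codedSet, Nat.unpair_pair] using hmem
        exact h1 ((hfiso _ _).2 this)
      · intro hmem
        have : Q (F j) (F i) := by simpa [codedSet, Nat.unpair_pair] using hmem
        exact h2 ((hfiso _ _).2 this)
    -- collect all required facts in one list
    set zs : List ℕ :=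
      ((List.range (3 * n + 6)).map fun k => Nat.pair (F k) (F (k + 1))) ++
      ((List.range (3 * n + 6)).map fun k => Nat.pair (F (k + 1)) (F k)) ++
      [Nat.pair (F 0) (F 2), Nat.pair (F 2) (F 0),
       Nat.pair (F (3 * n + 4)) (F (3 * n + 6)), Nat.pair (F (3 * n + 6)) (F (3 * n + 4))]
      with hzs
    have hdom : ∀ z ∈ zs, ∃ s, (evaln s c z).isSome = true := by
      intro z hz
      rw [hzs] at hz
      simp only [List.mem_append, List.mem_map, List.mem_range, List.mem_cons,
        List.mem_singleton, List.not_mem_nil, or_false] at hz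
      rcases hz with (⟨k, hk, rfl⟩ | ⟨k, hk, rfl⟩) | rfl | rfl | rfl | rfl
      · exact (hcdom _).1 (hQpair k (k + 1) (by omega) (by omega) (Or.inl rfl)).1
      · exact (hcdom _).1 (hQpair k (k + 1) (by omega) (by omega) (Or.inl rfl)).2
      · exact (hcdom _).1
          (hQpair 0 2 (by omega) (by omega) (Or.inr (Or.inl ⟨rfl, rfl, hn⟩))).1
      · exact (hcdom _).1
          (hQpair 0 2 (by omega) (by omega) (Or.inr (Or.inl ⟨rfl, rfl, hn⟩))).2
      · exact (hcdom _).1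
          (hQpair (3 * n + 4) (3 * n + 6) (by omega) (by omega) (Or.inr (Or.inr ⟨rfl, rfl⟩))).1
      · exact (hcdom _).1
          (hQpair (3 * n + 4) (3 * n + 6) (by omega) (by omega) (Or.inr (Or.inr ⟨rfl, rfl⟩))).2
    obtain ⟨s, hs⟩ := exists_stage zs hdom
    refine ⟨Nat.pair (Encodable.encode l) s, ?_⟩
    rw [goodB_iff]
    have hw1 : (Nat.pair (Encodable.encode l) s).unpair.1 = Encodable.encode l := by
      simp [Nat.unpair_pair]
    have hw2 : (Nat.pair (Encodable.encode l) s).unpair.2 = s := by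
      simp [Nat.unpair_pair]
    rw [hw1, hw2, Denumerable.ofNat_encode]
    have hmemzs : ∀ u v : ℕ, (Nat.pair u v) ∈ zs → (Nat.pair v u) ∈ zs →
        icmpB c s u v = true := by
      intro u v h1 h2
      rw [icmpB, Bool.and_eq_true]
      exact ⟨hs _ h1, hs _ h2⟩
    refine ⟨by simp [hldef], ?_, ?_, ?_, ?_⟩
    · intro i hi j hj
      rw [hlget i hi, hlget j (by omega)]
      intro hcon
      have := hFinj i j hcon
      omega
    · intro k hk
      rw [hlget k (by omega), hlget (k + 1) (by omega)]
      apply hmemzs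
      · rw [hzs]
        simp only [List.mem_append, List.mem_map, List.mem_range]
        exact Or.inl (Or.inl ⟨k, hk, rfl⟩)
      · rw [hzs]
        simp only [List.mem_append, List.mem_map, List.mem_range]
        exact Or.inl (Or.inr ⟨k, hk, rfl⟩)
    · rw [hlget 0 (by omega), hlget 2 (by omega)]
      apply hmemzs <;> rw [hzs] <;> simp
    · rw [hlget (3 * n + 4) (by omega), hlget (3 * n + 6) (by omega)]
      apply hmemzs <;> rw [hzs] <;> simp

end NotIso

theorem exists_CE_partialOrder_not_iso_coCE :
    ∃ P : ℕ → ℕ → Prop, PartialOrderRel P ∧ SetCE (codedSet P) ∧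
      ∀ Q : ℕ → ℕ → Prop, PartialOrderRel Q → SetCoCE (codedSet Q) → ¬ Isomorphic P Q := by
  refine ⟨NotIso.Pord, NotIso.pord_partialOrder, NotIso.pord_ce, ?_⟩
  rintro Q hQpo hQco ⟨f, hfbij, hfiso⟩
  exact NotIso.halting_not_computable
    (ComputablePred.computable_iff_re_compl_re'.2
      ⟨NotIso.halting_re, NotIso.kbar_re Q hQco f hfbij hfiso⟩)

end CEOrders
end

section
/- For every co-c.e. preorder ≤_P on ℕ there exists a computable set A ⊆ ℕ × ℕ such that for all i, j ∈ ℕ, i ≤_P j if and only if A_i ⊆ A_j, where A_i denotes the column {n : (i,n) ∈ A}. Consequently every co-c.e. preorder on ℕ is isomorphic to the inclusion order on a computable family of sets. -/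
namespace CEOrders

namespace CoCEAux


/-- Bounded "for all y < n" as a Bool. -/
def allb (f : ℕ → Bool) (n : ℕ) : Bool := Nat.rec true (fun y IH => IH && f y) n

@[simp] theorem allb_zero (f : ℕ → Bool) : allb f 0 = true := rfl
@[simp] theorem allb_succ (f : ℕ → Bool) (n : ℕ) : allb f (n+1) = (allb f n && f n) := rfl

theorem allb_iff {f : ℕ → Bool} {n : ℕ} : allb f n = true ↔ ∀ y < n, f y = true := by
  induction n with
  | zero => simp
  | succ n ih =>
    simp only [allb_succ, Bool.and_eq_true, ih]
    constructor
    · rintro ⟨h1, h2⟩ y hy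
      rcases Nat.lt_succ_iff_lt_or_eq.1 hy with h | rfl
      · exact h1 y h
      · exact h2
    · intro h
      exact ⟨fun y hy => h y (Nat.lt_succ_of_lt hy), h n (Nat.lt_succ_self n)⟩

theorem allb_exists {g : ℕ → ℕ → Bool}
    (gmono : ∀ {t t' y}, t ≤ t' → g t y = true → g t' y = true)
    {n : ℕ} (h : ∀ y < n, ∃ t, g t y = true) : ∃ t, allb (g t) n = true := by
  induction n with
  | zero => exact ⟨0, rfl⟩
  | succ n ih =>
    obtain ⟨t1, ht1⟩ := ih (fun y hy => h y (Nat.lt_succ_of_lt hy))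
    obtain ⟨t2, ht2⟩ := h n (Nat.lt_succ_self n)
    refine ⟨max t1 t2, ?_⟩
    rw [allb_iff] at ht1 ⊢
    intro y hy
    rcases Nat.lt_succ_iff_lt_or_eq.1 hy with h' | rfl
    · exact gmono (le_max_left _ _) (ht1 y h')
    · exact gmono (le_max_right _ _) ht2

/-- Bounded search: least `r < t` with `f r = true`. -/
def bfind (f : ℕ → Bool) (t : ℕ) : Option ℕ :=
  Nat.rec none (fun r IH => Option.casesOn IH (cond (f r) (some r) none) some) t

@[simp] theorem bfind_zero (f : ℕ → Bool) : bfind f 0 = none := rfl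
theorem bfind_succ (f : ℕ → Bool) (t : ℕ) :
    bfind f (t+1) = Option.casesOn (bfind f t) (cond (f t) (some t) none) some := rfl

theorem bfind_mono {f : ℕ → Bool} {t t' r : ℕ} (h : t ≤ t') (hf : bfind f t = some r) :
    bfind f t' = some r := by
  induction t' with
  | zero => exact (Nat.le_zero.1 h ▸ hf)
  | succ t' ih =>
    rcases Nat.lt_succ_iff_lt_or_eq.1 (Nat.lt_succ_of_le h) with h' | rfl
    · have := ih (Nat.lt_succ_iff.1 h')
      rw [bfind_succ, this]
    · exact hf

theorem bfind_spec {f : ℕ → Bool} {t r : ℕ} (hf : bfind f t = some r) : f r = true := by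
  induction t with
  | zero => simp at hf
  | succ t ih =>
    rw [bfind_succ] at hf
    cases h : bfind f t with
    | some x => rw [h] at hf; exact ih (h.trans (by simpa using hf))
    | none =>
      rw [h] at hf
      cases hfr : f t with
      | true =>
        have ht : t = r := Option.some.inj (by simpa [hfr] using hf)
        exact ht ▸ hfr
      | false => simp [hfr] at hf

theorem bfind_isSome {f : ℕ → Bool} {r t : ℕ} (hr : f r = true) (hrt : r < t) :
    (bfind f t).isSome := by
  induction t with
  | zero => exact absurd hrt (Nat.not_lt_zero r)
  | succ t ih =>
    rw [bfind_succ]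
    cases h : bfind f t with
    | some x => simp
    | none =>
      rcases Nat.lt_succ_iff_lt_or_eq.1 hrt with h' | rfl
      · have := ih h'; rw [h] at this; simp at this
      · simp [hr]


/-- Certificate that it is safe to declare `k` "true": every currently-"false"
position `y` (and the anchor `b`) has `¬ P k y` enumerated by stage `r`. -/
def certT (e : ℕ → ℕ → Bool) (b r k : ℕ) (l : List Bool) : Bool :=
  e r (Nat.pair k b) && allb (fun y => l.getD y true || e r (Nat.pair k y)) l.length

/-- Certificate that it is safe to declare `k` "false". -/
def certF (e : ℕ → ℕ → Bool) (a r k : ℕ) (l : List Bool) : Bool :=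
  e r (Nat.pair a k) && allb (fun y => !(l.getD y false) || e r (Nat.pair y k)) l.length

/-- Decide position `k`, given the list `l` of previous decisions, searching
stages `< t` for a certificate. -/
def stepD (e : ℕ → ℕ → Bool) (a b t k : ℕ) (l : List Bool) : Option Bool :=
  if k = a then some true
  else if k = b then some false
  else (bfind (fun r => certF e a r k l || certT e b r k l) t).map
    fun r => !(certF e a r k l)

/-- Sequentially decide positions `0, …, m-1` (with stage bound `t`). -/
def runL (e : ℕ → ℕ → Bool) (a b t m : ℕ) : Option (List Bool) :=
  Nat.rec (some [])
    (fun k IH => IH.bind fun l => (stepD e a b t k l).map fun d => l ++ [d]) m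

variable {e : ℕ → ℕ → Bool} {a b : ℕ}

@[simp] theorem runL_zero (t : ℕ) : runL e a b t 0 = some [] := rfl
theorem runL_succ (t m : ℕ) :
    runL e a b t (m+1)
      = (runL e a b t m).bind fun l => (stepD e a b t m l).map fun d => l ++ [d] := rfl

theorem stepD_mono {t t' k : ℕ} {l : List Bool} {d : Bool} (h : t ≤ t')
    (hs : stepD e a b t k l = some d) : stepD e a b t' k l = some d := by
  unfold stepD at hs ⊢
  split_ifs at hs ⊢
  · exact hs
  · exact hs
  · simp only [Option.map_eq_some_iff] at hs ⊢
    obtain ⟨r, hr, hd⟩ := hs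
    exact ⟨r, bfind_mono h hr, hd⟩

theorem runL_mono {t t' m : ℕ} {l : List Bool} (h : t ≤ t')
    (hr : runL e a b t m = some l) : runL e a b t' m = some l := by
  induction m generalizing l with
  | zero => simpa using hr
  | succ m ih =>
    rw [runL_succ] at hr ⊢
    simp only [Option.bind_eq_some_iff] at hr ⊢
    obtain ⟨l0, hl0, hstep⟩ := hr
    refine ⟨l0, ih hl0, ?_⟩
    simp only [Option.map_eq_some_iff] at hstep ⊢
    obtain ⟨d, hd, hld⟩ := hstep
    exact ⟨d, stepD_mono h hd, hld⟩

theorem runL_length {t m : ℕ} {l : List Bool} (hr : runL e a b t m = some l) :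
    l.length = m := by
  induction m generalizing l with
  | zero => simp at hr; simp [← hr]
  | succ m ih =>
    rw [runL_succ] at hr
    simp only [Option.bind_eq_some_iff, Option.map_eq_some_iff] at hr
    obtain ⟨l0, hl0, d, _, rfl⟩ := hr
    simp [ih hl0]

theorem runL_take {t m m' : ℕ} {l' : List Bool} (h : m ≤ m')
    (hr : runL e a b t m' = some l') : runL e a b t m = some (l'.take m) := by
  induction m' generalizing l' with
  | zero => cases Nat.le_zero.1 h; simpa using hr
  | succ m' ih =>
    rcases Nat.lt_succ_iff_lt_or_eq.1 (Nat.lt_succ_of_le h) with h' | rfl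
    · have hm : m ≤ m' := Nat.lt_succ_iff.1 h'
      rw [runL_succ] at hr
      simp only [Option.bind_eq_some_iff, Option.map_eq_some_iff] at hr
      obtain ⟨l0, hl0, d, _, rfl⟩ := hr
      rw [List.take_append_of_le_length (by rw [runL_length hl0]; exact hm)]
      exact ih hm hl0
    · rw [hr, List.take_of_length_le (le_of_eq (runL_length hr))]

theorem runL_getElem_a {t m : ℕ} {l : List Bool} (hr : runL e a b t m = some l)
    (ha : a < m) : l[a]? = some true := by
  induction m generalizing l with
  | zero => exact absurd ha (Nat.not_lt_zero a)
  | succ m ih =>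
    rw [runL_succ] at hr
    simp only [Option.bind_eq_some_iff, Option.map_eq_some_iff] at hr
    obtain ⟨l0, hl0, d, hd, rfl⟩ := hr
    rcases Nat.lt_succ_iff_lt_or_eq.1 ha with h' | rfl
    · rw [List.getElem?_append_left (by rw [runL_length hl0]; exact h')]
      exact ih hl0 h'
    · have hlen : l0.length = a := runL_length hl0
      have hd' : d = true := by
        unfold stepD at hd; rw [if_pos rfl] at hd; exact (Option.some.inj hd).symm
      subst hd'
      rw [← hlen, List.getElem?_concat_length]

theorem runL_getElem_b (hba : b ≠ a) {t m : ℕ} {l : List Bool}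
    (hr : runL e a b t m = some l) (hb : b < m) : l[b]? = some false := by
  induction m generalizing l with
  | zero => exact absurd hb (Nat.not_lt_zero b)
  | succ m ih =>
    rw [runL_succ] at hr
    simp only [Option.bind_eq_some_iff, Option.map_eq_some_iff] at hr
    obtain ⟨l0, hl0, d, hd, rfl⟩ := hr
    rcases Nat.lt_succ_iff_lt_or_eq.1 hb with h' | rfl
    · rw [List.getElem?_append_left (by rw [runL_length hl0]; exact h')]
      exact ih hl0 h'
    · have hlen : l0.length = b := runL_length hl0
      have hd' : d = false := by
        unfold stepD at hd; rw [if_neg hba, if_pos rfl] at hd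
        exact (Option.some.inj hd).symm
      subst hd'
      rw [← hlen, List.getElem?_concat_length]

/-! ### Semantic analysis -/

/-- Positions currently declared "true" (including the anchor `a`). -/
def T1 (a b : ℕ) (l : List Bool) (x : ℕ) : Prop :=
  x = a ∨ (x < l.length ∧ x ≠ b ∧ l.getD x false = true)

/-- Positions currently declared "false" (including the anchor `b`). -/
def T0 (a b : ℕ) (l : List Bool) (y : ℕ) : Prop :=
  y = b ∨ (y < l.length ∧ y ≠ a ∧ l.getD y true = false)

/-- The key invariant: every (true, false) cross pair is a non-pair of `P`. -/
def Inv (P : ℕ → ℕ → Prop) (a b : ℕ) (l : List Bool) : Prop :=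
  ∀ x y, T1 a b l x → T0 a b l y → ¬ P x y

section Semantics

variable {P : ℕ → ℕ → Prop} {e : ℕ → ℕ → Bool} {a b : ℕ}

theorem getD_concat_length (l : List Bool) (d d' : Bool) : (l ++ [d]).getD l.length d' = d := by
  rw [List.getD_eq_getElem?_getD, List.getElem?_concat_length]; rfl

theorem T1_append {l : List Bool} {d : Bool} {x : ℕ} (h : T1 a b (l ++ [d]) x) :
    T1 a b l x ∨ (x = l.length ∧ x ≠ b ∧ d = true) := by
  rcases h with h | ⟨hlt, hneb, hval⟩
  · exact Or.inl (Or.inl h)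
  · rw [List.length_append, List.length_singleton] at hlt
    rcases Nat.lt_succ_iff_lt_or_eq.1 hlt with h' | rfl
    · rw [List.getD_append _ _ _ _ h'] at hval
      exact Or.inl (Or.inr ⟨h', hneb, hval⟩)
    · rw [getD_concat_length] at hval
      exact Or.inr ⟨rfl, hneb, hval⟩

theorem T0_append {l : List Bool} {d : Bool} {y : ℕ} (h : T0 a b (l ++ [d]) y) :
    T0 a b l y ∨ (y = l.length ∧ y ≠ a ∧ d = false) := by
  rcases h with h | ⟨hlt, hnea, hval⟩
  · exact Or.inl (Or.inl h)
  · rw [List.length_append, List.length_singleton] at hlt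
    rcases Nat.lt_succ_iff_lt_or_eq.1 hlt with h' | rfl
    · rw [List.getD_append _ _ _ _ h'] at hval
      exact Or.inl (Or.inr ⟨h', hnea, hval⟩)
    · rw [getD_concat_length] at hval
      exact Or.inr ⟨rfl, hnea, hval⟩

variable (hsound : ∀ t x y, e t (Nat.pair x y) = true → ¬ P x y)
variable (hcompl : ∀ x y, ¬ P x y → ∃ t, e t (Nat.pair x y) = true)
variable (hemono : ∀ {t t' m}, t ≤ t' → e t m = true → e t' m = true)

section CertSound
include hsound

theorem certT_sound {r k : ℕ} {l : List Bool} (hc : certT e b r k l = true) :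
    ∀ y, T0 a b l y → ¬ P k y := by
  rw [certT, Bool.and_eq_true] at hc
  intro y hy
  rcases hy with rfl | ⟨hlt, _, hval⟩
  · exact hsound r k y hc.1
  · have := allb_iff.1 hc.2 y hlt
    rw [hval] at this
    simp only [Bool.false_or] at this
    exact hsound r k y this

theorem certF_sound {r k : ℕ} {l : List Bool} (hc : certF e a r k l = true) :
    ∀ x, T1 a b l x → ¬ P x k := by
  rw [certF, Bool.and_eq_true] at hc
  intro x hx
  rcases hx with rfl | ⟨hlt, _, hval⟩
  · exact hsound r x k hc.1
  · have := allb_iff.1 hc.2 x hlt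
    rw [hval] at this
    simp only [Bool.not_true, Bool.false_or] at this
    exact hsound r x k this

end CertSound

section CertExists
include hcompl hemono

theorem certT_exists {k : ℕ} {l : List Bool}
    (hva : a < l.length → l.getD a true = true)
    (hT0 : ∀ y, T0 a b l y → ¬ P k y) : ∃ r, certT e b r k l = true := by
  obtain ⟨tb, htb⟩ := hcompl k b (hT0 b (Or.inl rfl))
  have hall : ∃ r, allb (fun y => l.getD y true || e r (Nat.pair k y)) l.length = true := by
    apply allb_exists
    · intro t t' y ht hy
      rw [Bool.or_eq_true] at hy ⊢
      rcases hy with h | h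
      · exact Or.inl h
      · exact Or.inr (hemono ht h)
    · intro y hy
      cases hval : l.getD y true with
      | true => exact ⟨0, by simp [hval]⟩
      | false =>
        have hynea : y ≠ a := by
          rintro rfl
          rw [hva hy] at hval
          simp at hval
        obtain ⟨t, ht⟩ := hcompl k y (hT0 y (Or.inr ⟨hy, hynea, hval⟩))
        exact ⟨t, by simp [ht]⟩
  obtain ⟨tg, htg⟩ := hall
  refine ⟨max tb tg, ?_⟩
  rw [certT, Bool.and_eq_true]
  constructor
  · exact hemono (le_max_left _ _) htb
  · rw [allb_iff] at htg ⊢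
    intro y hy
    have htgy := htg y hy
    rw [Bool.or_eq_true] at htgy ⊢
    rcases htgy with h | h
    · exact Or.inl h
    · exact Or.inr (hemono (le_max_right _ _) h)

theorem certF_exists {k : ℕ} {l : List Bool}
    (hvb : b < l.length → l.getD b false = false)
    (hT1 : ∀ x, T1 a b l x → ¬ P x k) : ∃ r, certF e a r k l = true := by
  obtain ⟨ta, hta⟩ := hcompl a k (hT1 a (Or.inl rfl))
  have hall : ∃ r, allb (fun y => !(l.getD y false) || e r (Nat.pair y k)) l.length = true := by
    apply allb_exists
    · intro t t' y ht hy
      rw [Bool.or_eq_true] at hy ⊢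
      rcases hy with h | h
      · exact Or.inl h
      · exact Or.inr (hemono ht h)
    · intro y hy
      cases hval : l.getD y false with
      | false => exact ⟨0, by simp [hval]⟩
      | true =>
        have hyneb : y ≠ b := by
          rintro rfl
          rw [hvb hy] at hval
          simp at hval
        obtain ⟨t, ht⟩ := hcompl y k (hT1 y (Or.inr ⟨hy, hyneb, hval⟩))
        exact ⟨t, by simp [ht]⟩
  obtain ⟨tg, htg⟩ := hall
  refine ⟨max ta tg, ?_⟩
  rw [certF, Bool.and_eq_true]
  constructor
  · exact hemono (le_max_left _ _) hta
  · rw [allb_iff] at htg ⊢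
    intro y hy
    have htgy := htg y hy
    rw [Bool.or_eq_true] at htgy ⊢
    rcases htgy with h | h
    · exact Or.inl h
    · exact Or.inr (hemono (le_max_right _ _) h)

end CertExists

theorem step_sound (hsound : ∀ t x y, e t (Nat.pair x y) = true → ¬ P x y)
    {t k : ℕ} {l : List Bool} {d : Bool}
    (hk : k = l.length) (hinv : Inv P a b l)
    (hd : stepD e a b t k l = some d) : Inv P a b (l ++ [d]) := by
  intro x y hx hy
  rcases T1_append hx with hx' | ⟨hxl, hxneb, hdt⟩
  · rcases T0_append hy with hy' | ⟨hyl, hynea, hdf⟩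
    · exact hinv x y hx' hy'
    · -- y is new, declared false
      unfold stepD at hd
      split_ifs at hd with h1 h2
      · rw [← Option.some.inj hd] at hdf; simp at hdf
      · exact hinv x y hx' (Or.inl (hyl.trans (hk.symm.trans h2)))
      · simp only [Option.map_eq_some_iff] at hd
        obtain ⟨r, hr, hdd⟩ := hd
        have hcf : certF e a r k l = true := by
          cases hcf : certF e a r k l with
          | true => rfl
          | false => rw [← hdd, hcf] at hdf; simp at hdf
        have hyk : y = k := hyl.trans hk.symm
        exact fun hp => certF_sound hsound hcf x hx' (hyk ▸ hp)
  · -- x is new, declared true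
    have hxk : x = k := hxl.trans hk.symm
    unfold stepD at hd
    split_ifs at hd with h1 h2
    · -- k = a
      have hx'' : T1 a b l x := Or.inl (hxk.trans h1)
      rcases T0_append hy with hy' | ⟨hyl, hynea, hdf⟩
      · exact hinv x y hx'' hy'
      · exact absurd ((hyl.trans hk.symm).trans h1) hynea
    · rw [← Option.some.inj hd] at hdt; simp at hdt
    · simp only [Option.map_eq_some_iff] at hd
      obtain ⟨r, hr, hdd⟩ := hd
      have hcf : certF e a r k l = false := by
        cases hcf : certF e a r k l with
        | false => rfl
        | true => rw [← hdd, hcf] at hdt; simp at hdt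
      have hct : certT e b r k l = true := by
        have := bfind_spec hr
        rw [hcf] at this; simpa using this
      rcases T0_append hy with hy' | ⟨hyl, hynea, hdf⟩
      · exact fun hp => certT_sound hsound hct y hy' (hxk ▸ hp)
      · rw [← hdd] at hdf hdt
        rw [hdf] at hdt; simp at hdt

theorem step_exists
    (hcompl : ∀ x y, ¬ P x y → ∃ t, e t (Nat.pair x y) = true)
    (hemono : ∀ {t t' m}, t ≤ t' → e t m = true → e t' m = true)
    (htrans : ∀ x y z, P x y → P y z → P x z)
    {k : ℕ} {l : List Bool}
    (hinv : Inv P a b l)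
    (hva : a < l.length → l.getD a true = true)
    (hvb : b < l.length → l.getD b false = false) :
    ∃ t, (stepD e a b t k l).isSome := by
  by_cases h1 : k = a
  · exact ⟨0, by simp [stepD, h1]⟩
  by_cases h2 : k = b
  · exact ⟨0, by unfold stepD; rw [if_neg h1, if_pos h2]; rfl⟩
  by_cases hc : ∀ y, T0 a b l y → ¬ P k y
  · obtain ⟨r, hr⟩ := certT_exists hcompl hemono hva hc
    refine ⟨r + 1, ?_⟩
    unfold stepD
    rw [if_neg h1, if_neg h2]
    obtain ⟨r', hr'⟩ := Option.isSome_iff_exists.1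
      (bfind_isSome (f := fun r => certF e a r k l || certT e b r k l)
        (show (certF e a r k l || certT e b r k l) = true by rw [hr, Bool.or_true]) (Nat.lt_succ_self r))
    rw [hr']; rfl
  · push_neg at hc
    obtain ⟨y₀, hy₀T, hy₀P⟩ := hc
    have hT1 : ∀ x, T1 a b l x → ¬ P x k := fun x hx hpx =>
      hinv x y₀ hx hy₀T (htrans _ _ _ hpx hy₀P)
    obtain ⟨r, hr⟩ := certF_exists hcompl hemono hvb hT1
    refine ⟨r + 1, ?_⟩
    unfold stepD
    rw [if_neg h1, if_neg h2]
    obtain ⟨r', hr'⟩ := Option.isSome_iff_exists.1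
      (bfind_isSome (f := fun r => certF e a r k l || certT e b r k l)
        (show (certF e a r k l || certT e b r k l) = true by rw [hr, Bool.true_or]) (Nat.lt_succ_self r))
    rw [hr']; rfl

theorem run_inv (hsound : ∀ t x y, e t (Nat.pair x y) = true → ¬ P x y)
    (hab : ¬ P a b) {t m : ℕ} {l : List Bool}
    (hr : runL e a b t m = some l) : Inv P a b l := by
  induction m generalizing l with
  | zero =>
    simp only [runL_zero, Option.some.injEq] at hr
    subst hr
    rintro x y (rfl | ⟨h, -⟩) hy
    · rcases hy with rfl | ⟨h, -⟩
      · exact hab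
      · exact absurd h (by simp)
    · exact absurd h (by simp)
  | succ m ih =>
    rw [runL_succ] at hr
    simp only [Option.bind_eq_some_iff, Option.map_eq_some_iff] at hr
    obtain ⟨l0, hl0, d, hd, rfl⟩ := hr
    exact step_sound hsound ((runL_length hl0).symm) (ih hl0) hd

theorem run_exists
    (hsound : ∀ t x y, e t (Nat.pair x y) = true → ¬ P x y)
    (hcompl : ∀ x y, ¬ P x y → ∃ t, e t (Nat.pair x y) = true)
    (hemono : ∀ {t t' m}, t ≤ t' → e t m = true → e t' m = true)
    (hrefl : ∀ x, P x x)
    (htrans : ∀ x y z, P x y → P y z → P x z)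
    (hab : ¬ P a b) : ∀ m, ∃ t l, runL e a b t m = some l := by
  have hba : b ≠ a := fun h => hab (h ▸ hrefl b)
  intro m
  induction m with
  | zero => exact ⟨0, [], rfl⟩
  | succ m ih =>
    obtain ⟨t, l, hl⟩ := ih
    have hlen := runL_length hl
    have hva : a < l.length → l.getD a true = true := by
      intro h
      rw [List.getD_eq_getElem?_getD, runL_getElem_a hl (hlen ▸ h)]; rfl
    have hvb : b < l.length → l.getD b false = false := by
      intro h
      rw [List.getD_eq_getElem?_getD, runL_getElem_b hba hl (hlen ▸ h)]; rfl
    obtain ⟨t₂, ht₂⟩ := step_exists hcompl hemono htrans (k := m)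
      (run_inv hsound hab hl) hva hvb
    obtain ⟨d, hd⟩ := Option.isSome_iff_exists.1 ht₂
    refine ⟨max t t₂, l ++ [d], ?_⟩
    rw [runL_succ, runL_mono (le_max_left _ _) hl, Option.bind_some,
      stepD_mono (le_max_right _ _) hd, Option.map_some]

theorem cross
    (hsound : ∀ t x y, e t (Nat.pair x y) = true → ¬ P x y)
    (hcompl : ∀ x y, ¬ P x y → ∃ t, e t (Nat.pair x y) = true)
    (hemono : ∀ {t t' m}, t ≤ t' → e t m = true → e t' m = true)
    (hrefl : ∀ x, P x x)
    (htrans : ∀ x y z, P x y → P y z → P x z)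
    (hab : ¬ P a b) {i j : ℕ}
    (hi : ∃ t l, runL e a b t (i+1) = some l ∧ l[i]? = some true)
    (hj : ∃ t l, runL e a b t (j+1) = some l ∧ l[j]? = some false) :
    ¬ P i j := by
  have hba : b ≠ a := fun h => hab (h ▸ hrefl b)
  obtain ⟨t₁, l₁, h₁, hv₁⟩ := hi
  obtain ⟨t₂, l₂, h₂, hv₂⟩ := hj
  set m := max (i+1) (j+1) with hm
  obtain ⟨t₃, L, hL⟩ := run_exists hsound hcompl hemono hrefl htrans hab m
  set t := max t₁ (max t₂ t₃) with ht
  have hLt : runL e a b t m = some L := runL_mono (le_max_of_le_right (le_max_right _ _)) hL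
  have hLi : L[i]? = some true := by
    have h1t : runL e a b t (i+1) = some l₁ := runL_mono (le_max_left _ _) h₁
    have htake := runL_take (le_max_left (i+1) (j+1)) hLt
    rw [h1t] at htake
    have : l₁ = L.take (i+1) := Option.some.inj htake
    rw [this, List.getElem?_take, if_pos (Nat.lt_succ_self i)] at hv₁
    exact hv₁
  have hLj : L[j]? = some false := by
    have h2t : runL e a b t (j+1) = some l₂ :=
      runL_mono (le_max_of_le_right (le_max_left _ _)) h₂
    have htake := runL_take (le_max_right (i+1) (j+1)) hLt
    rw [h2t] at htake
    have : l₂ = L.take (j+1) := Option.some.inj htake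
    rw [this, List.getElem?_take, if_pos (Nat.lt_succ_self j)] at hv₂
    exact hv₂
  have hLlen : L.length = m := runL_length hLt
  have hT1 : T1 a b L i := by
    refine Or.inr ⟨by rw [hLlen]; exact le_max_left (i+1) (j+1), ?_, ?_⟩
    · rintro rfl
      rw [runL_getElem_b hba hLt (le_max_left _ (j+1))] at hLi
      simpa using Option.some.inj hLi
    · rw [List.getD_eq_getElem?_getD, hLi]; rfl
  have hT0 : T0 a b L j := by
    refine Or.inr ⟨by rw [hLlen]; exact le_max_right (i+1) (j+1), ?_, ?_⟩
    · rintro rfl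
      rw [runL_getElem_a hLt (le_max_right (i+1) _)] at hLj
      simpa using Option.some.inj hLj
    · rw [List.getD_eq_getElem?_getD, hLj]; rfl
  exact run_inv hsound hab hLt i j hT1 hT0

end Semantics

/-! ### The column function -/

/-- Membership of witness `w = ⟨a, ⟨b, s⟩⟩` in the `k`-th column, at stage bound `t`. -/
def outp (e : ℕ → ℕ → Bool) (p : ℕ × ℕ) (t : ℕ) : Option Bool :=
  cond (e p.2.unpair.2.unpair.2 (Nat.pair p.2.unpair.1 p.2.unpair.2.unpair.1))
    ((runL e p.2.unpair.1 p.2.unpair.2.unpair.1 t (p.1 + 1)).map fun l => l.getD p.1 false)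
    (some false)

/-! ### Computability -/

section Computability

variable {e : ℕ → ℕ → Bool}

theorem primrec_allb {α} [Primcodable α] {f : α → ℕ → Bool} (hf : Primrec₂ f) :
    Primrec₂ fun x n => allb (f x) n :=
  (Primrec.nat_rec' Primrec.snd (Primrec.const true)
    (((Primrec.dom_bool₂ (· && ·)).comp (Primrec.snd.comp Primrec.snd)
      (hf.comp (Primrec.fst.comp Primrec.fst) (Primrec.fst.comp Primrec.snd))).to₂)).to₂

theorem primrec_bfind {α} [Primcodable α] {f : α → ℕ → Bool} (hf : Primrec₂ f) :
    Primrec₂ fun x t => bfind (f x) t :=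
  (Primrec.nat_rec' Primrec.snd (Primrec.const none)
    ((Primrec.option_casesOn (Primrec.snd.comp Primrec.snd)
      (Primrec.cond (hf.comp (Primrec.fst.comp Primrec.fst) (Primrec.fst.comp Primrec.snd))
        (Primrec.option_some.comp (Primrec.fst.comp Primrec.snd)) (Primrec.const none))
      (Primrec.option_some.comp₂ Primrec₂.right)).to₂)).to₂

variable (he : Primrec₂ e)
include he

theorem primrec_certF :
    Primrec fun z : (ℕ × ℕ × ℕ × List Bool) × ℕ =>
      certF e z.1.1 z.2 z.1.2.2.1 z.1.2.2.2 := by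
  have pa : Primrec fun z : (ℕ × ℕ × ℕ × List Bool) × ℕ => z.1.1 :=
    Primrec.fst.comp Primrec.fst
  have pk : Primrec fun z : (ℕ × ℕ × ℕ × List Bool) × ℕ => z.1.2.2.1 :=
    Primrec.fst.comp (Primrec.snd.comp (Primrec.snd.comp Primrec.fst))
  have pl : Primrec fun z : (ℕ × ℕ × ℕ × List Bool) × ℕ => z.1.2.2.2 :=
    Primrec.snd.comp (Primrec.snd.comp (Primrec.snd.comp Primrec.fst))
  have pr : Primrec fun z : (ℕ × ℕ × ℕ × List Bool) × ℕ => z.2 := Primrec.snd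
  have h1 : Primrec fun z : (ℕ × ℕ × ℕ × List Bool) × ℕ =>
      e z.2 (Nat.pair z.1.1 z.1.2.2.1) := he.comp pr (Primrec₂.natPair.comp pa pk)
  have hf : Primrec₂ fun (z : (ℕ × ℕ × ℕ × List Bool) × ℕ) (y : ℕ) =>
      (!(z.1.2.2.2.getD y false)) || e z.2 (Nat.pair y z.1.2.2.1) :=
    ((Primrec.dom_bool₂ (· || ·)).comp
      ((Primrec.dom_bool (!·)).comp
        ((Primrec.list_getD false).comp (pl.comp Primrec.fst) Primrec.snd))
      (he.comp (pr.comp Primrec.fst)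
        (Primrec₂.natPair.comp Primrec.snd (pk.comp Primrec.fst)))).to₂
  have h2 : Primrec fun z : (ℕ × ℕ × ℕ × List Bool) × ℕ =>
      allb (fun y => (!(z.1.2.2.2.getD y false)) || e z.2 (Nat.pair y z.1.2.2.1))
        z.1.2.2.2.length :=
    (primrec_allb hf).comp Primrec.id (Primrec.list_length.comp pl)
  exact (Primrec.dom_bool₂ (· && ·)).comp h1 h2

theorem primrec_certT :
    Primrec fun z : (ℕ × ℕ × ℕ × List Bool) × ℕ =>
      certT e z.1.2.1 z.2 z.1.2.2.1 z.1.2.2.2 := by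
  have pb : Primrec fun z : (ℕ × ℕ × ℕ × List Bool) × ℕ => z.1.2.1 :=
    Primrec.fst.comp (Primrec.snd.comp Primrec.fst)
  have pk : Primrec fun z : (ℕ × ℕ × ℕ × List Bool) × ℕ => z.1.2.2.1 :=
    Primrec.fst.comp (Primrec.snd.comp (Primrec.snd.comp Primrec.fst))
  have pl : Primrec fun z : (ℕ × ℕ × ℕ × List Bool) × ℕ => z.1.2.2.2 :=
    Primrec.snd.comp (Primrec.snd.comp (Primrec.snd.comp Primrec.fst))
  have pr : Primrec fun z : (ℕ × ℕ × ℕ × List Bool) × ℕ => z.2 := Primrec.snd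
  have h1 : Primrec fun z : (ℕ × ℕ × ℕ × List Bool) × ℕ =>
      e z.2 (Nat.pair z.1.2.2.1 z.1.2.1) := he.comp pr (Primrec₂.natPair.comp pk pb)
  have hf : Primrec₂ fun (z : (ℕ × ℕ × ℕ × List Bool) × ℕ) (y : ℕ) =>
      z.1.2.2.2.getD y true || e z.2 (Nat.pair z.1.2.2.1 y) :=
    ((Primrec.dom_bool₂ (· || ·)).comp
      ((Primrec.list_getD true).comp (pl.comp Primrec.fst) Primrec.snd)
      (he.comp (pr.comp Primrec.fst)
        (Primrec₂.natPair.comp (pk.comp Primrec.fst) Primrec.snd))).to₂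
  have h2 : Primrec fun z : (ℕ × ℕ × ℕ × List Bool) × ℕ =>
      allb (fun y => z.1.2.2.2.getD y true || e z.2 (Nat.pair z.1.2.2.1 y))
        z.1.2.2.2.length :=
    (primrec_allb hf).comp Primrec.id (Primrec.list_length.comp pl)
  exact (Primrec.dom_bool₂ (· && ·)).comp h1 h2

set_option maxHeartbeats 1000000 in
theorem primrec_stepD :
    Primrec fun z : (ℕ × ℕ × ℕ) × ℕ × List Bool =>
      stepD e z.1.1 z.1.2.1 z.1.2.2 z.2.1 z.2.2 := by
  have qa : Primrec fun z : (ℕ × ℕ × ℕ) × ℕ × List Bool => z.1.1 :=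
    Primrec.fst.comp Primrec.fst
  have qb : Primrec fun z : (ℕ × ℕ × ℕ) × ℕ × List Bool => z.1.2.1 :=
    Primrec.fst.comp (Primrec.snd.comp Primrec.fst)
  have qt : Primrec fun z : (ℕ × ℕ × ℕ) × ℕ × List Bool => z.1.2.2 :=
    Primrec.snd.comp (Primrec.snd.comp Primrec.fst)
  have qk : Primrec fun z : (ℕ × ℕ × ℕ) × ℕ × List Bool => z.2.1 :=
    Primrec.fst.comp Primrec.snd
  have ql : Primrec fun z : (ℕ × ℕ × ℕ) × ℕ × List Bool => z.2.2 :=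
    Primrec.snd.comp Primrec.snd
  have htuple : Primrec fun z : (ℕ × ℕ × ℕ) × ℕ × List Bool =>
      (z.1.1, z.1.2.1, z.2.1, z.2.2) := qa.pair (qb.pair (qk.pair ql))
  have hcert : Primrec₂ fun (x : ℕ × ℕ × ℕ × List Bool) (r : ℕ) =>
      certF e x.1 r x.2.2.1 x.2.2.2 || certT e x.2.1 r x.2.2.1 x.2.2.2 :=
    ((Primrec.dom_bool₂ (· || ·)).comp (primrec_certF he) (primrec_certT he)).to₂
  have hbf : Primrec fun z : (ℕ × ℕ × ℕ) × ℕ × List Bool =>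
      bfind (fun r => certF e z.1.1 r z.2.1 z.2.2 || certT e z.1.2.1 r z.2.1 z.2.2) z.1.2.2 :=
    (primrec_bfind hcert).comp htuple qt
  have hneg : Primrec₂ fun (z : (ℕ × ℕ × ℕ) × ℕ × List Bool) (r : ℕ) =>
      !(certF e z.1.1 r z.2.1 z.2.2) :=
    ((Primrec.dom_bool (!·)).comp
      ((primrec_certF he).comp ((htuple.comp Primrec.fst).pair Primrec.snd))).to₂
  have hbranch : Primrec fun z : (ℕ × ℕ × ℕ) × ℕ × List Bool =>
      (bfind (fun r => certF e z.1.1 r z.2.1 z.2.2 || certT e z.1.2.1 r z.2.1 z.2.2)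
        z.1.2.2).map fun r => !(certF e z.1.1 r z.2.1 z.2.2) :=
    Primrec.option_map hbf hneg
  exact Primrec.ite (Primrec.eq.comp qk qa) (Primrec.const (some true))
    (Primrec.ite (Primrec.eq.comp qk qb) (Primrec.const (some false)) hbranch)

set_option maxHeartbeats 1000000 in
theorem primrec_runL :
    Primrec₂ fun (x : ℕ × ℕ × ℕ) (m : ℕ) => runL e x.1 x.2.1 x.2.2 m := by
  have hh : Primrec₂ fun (p : (ℕ × ℕ × ℕ) × ℕ) (q : ℕ × Option (List Bool)) =>
      q.2.bind fun l => (stepD e p.1.1 p.1.2.1 p.1.2.2 q.1 l).map fun d => l ++ [d] := by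
    have hW : Primrec fun w : (((ℕ × ℕ × ℕ) × ℕ) × ℕ × Option (List Bool)) × List Bool =>
        ((w.1.1.1.1, w.1.1.1.2.1, w.1.1.1.2.2), (w.1.2.1, w.2)) :=
      (((Primrec.fst.comp (Primrec.fst.comp (Primrec.fst.comp Primrec.fst))).pair
        ((Primrec.fst.comp (Primrec.snd.comp (Primrec.fst.comp
          (Primrec.fst.comp Primrec.fst)))).pair
         (Primrec.snd.comp (Primrec.snd.comp (Primrec.fst.comp
          (Primrec.fst.comp Primrec.fst)))))).pair
        ((Primrec.fst.comp (Primrec.snd.comp (Primrec.fst))).pair Primrec.snd))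
    have hinner : Primrec₂ fun (w : ((ℕ × ℕ × ℕ) × ℕ) × ℕ × Option (List Bool))
        (l : List Bool) =>
        (stepD e w.1.1.1 w.1.1.2.1 w.1.1.2.2 w.2.1 l).map fun d => l ++ [d] :=
      (Primrec.option_map ((primrec_stepD he).comp hW)
        ((Primrec.list_concat.comp (Primrec.snd.comp Primrec.fst) Primrec.snd).to₂)).to₂
    exact (Primrec.option_bind (Primrec.snd.comp Primrec.snd) hinner).to₂
  exact (Primrec.nat_rec' Primrec.snd (Primrec.const (some [])) hh).to₂

theorem primrec_outp : Primrec₂ (outp e) := by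
  have hp1 : Primrec fun z : (ℕ × ℕ) × ℕ => z.1.1 := Primrec.fst.comp Primrec.fst
  have hp2 : Primrec fun z : (ℕ × ℕ) × ℕ => z.1.2 := Primrec.snd.comp Primrec.fst
  have hup : Primrec fun z : (ℕ × ℕ) × ℕ => z.1.2.unpair := Primrec.unpair.comp hp2
  have ua : Primrec fun z : (ℕ × ℕ) × ℕ => z.1.2.unpair.1 := Primrec.fst.comp hup
  have ub2 : Primrec fun z : (ℕ × ℕ) × ℕ => z.1.2.unpair.2.unpair :=
    Primrec.unpair.comp (Primrec.snd.comp hup)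
  have ub : Primrec fun z : (ℕ × ℕ) × ℕ => z.1.2.unpair.2.unpair.1 := Primrec.fst.comp ub2
  have us : Primrec fun z : (ℕ × ℕ) × ℕ => z.1.2.unpair.2.unpair.2 := Primrec.snd.comp ub2
  have hgate : Primrec fun z : (ℕ × ℕ) × ℕ =>
      e z.1.2.unpair.2.unpair.2 (Nat.pair z.1.2.unpair.1 z.1.2.unpair.2.unpair.1) :=
    he.comp us (Primrec₂.natPair.comp ua ub)
  have hrun : Primrec fun z : (ℕ × ℕ) × ℕ =>
      runL e z.1.2.unpair.1 z.1.2.unpair.2.unpair.1 z.2 (z.1.1 + 1) :=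
    (primrec_runL he).comp (ua.pair (ub.pair Primrec.snd)) (Primrec.succ.comp hp1)
  have hread : Primrec₂ fun (z : (ℕ × ℕ) × ℕ) (l : List Bool) => l.getD z.1.1 false :=
    ((Primrec.list_getD false).comp Primrec.snd (hp1.comp Primrec.fst)).to₂
  exact (Primrec.cond hgate (Primrec.option_map hrun hread)
    (Primrec.const (some false))).to₂

end Computability

/-! ### Reading off values -/

theorem getD_getElem?_true {l : List Bool} {k : ℕ} (h : k < l.length)
    (hv : l.getD k false = true) : l[k]? = some true := by
  rw [List.getElem?_eq_getElem h]
  rw [List.getD_eq_getElem _ _ h] at hv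
  rw [hv]

theorem getD_getElem?_false {l : List Bool} {k : ℕ} (h : k < l.length)
    (hv : l.getD k true = false) : l[k]? = some false := by
  rw [List.getElem?_eq_getElem h]
  rw [List.getD_eq_getElem _ _ h] at hv
  rw [hv]

end CoCEAux


open CoCEAux in
theorem coCE_preorder_iso_inclusion_on_computable_family :
    ∀ P : ℕ → ℕ → Prop, PreorderRel P → SetCoCE (codedSet P) →
      ∃ A : Set (ℕ × ℕ), ComputablePred (· ∈ A) ∧
        ∀ i j : ℕ, P i j ↔ {n : ℕ | (i, n) ∈ A} ⊆ {n : ℕ | (j, n) ∈ A} := by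
  intro P hP hco
  obtain ⟨hrefl, htrans⟩ := hP
  -- extract a code for the complement of P
  have hpart : Partrec fun n : ℕ =>
      (Part.assert (n ∉ codedSet P) fun _ => Part.some ()).map fun _ => (0 : ℕ) :=
    hco.map ((Computable.const 0).comp Computable.fst).to₂
  obtain ⟨c, hc⟩ := Nat.Partrec.Code.exists_code.1 (Partrec.nat_iff.1 hpart)
  have hdom : ∀ m : ℕ, (c.eval m).Dom ↔ ¬ P m.unpair.1 m.unpair.2 := by
    intro m
    rw [hc]
    simp [codedSet, Part.assert]
  set e : ℕ → ℕ → Bool := fun t m => (Nat.Partrec.Code.evaln t c m).isSome with he_def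
  have he : Primrec₂ e :=
    (Primrec.option_isSome.comp
      (Nat.Partrec.Code.primrec_evaln.comp
        ((Primrec.fst.pair (Primrec.const c)).pair Primrec.snd))).to₂
  have hemono : ∀ {t t' m : ℕ}, t ≤ t' → e t m = true → e t' m = true := by
    intro t t' m htt h
    obtain ⟨v, hv⟩ := Option.isSome_iff_exists.1 h
    exact Option.isSome_iff_exists.2 ⟨v, Nat.Partrec.Code.evaln_mono htt hv⟩
  have hsound : ∀ t x y, e t (Nat.pair x y) = true → ¬ P x y := by
    intro t x y h
    obtain ⟨v, hv⟩ := Option.isSome_iff_exists.1 h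
    have := Nat.Partrec.Code.evaln_sound (k := t) (c := c) hv
    have hd := (hdom (Nat.pair x y)).1 (Part.dom_iff_mem.2 ⟨_, this⟩)
    simpa using hd
  have hcompl : ∀ x y, ¬ P x y → ∃ t, e t (Nat.pair x y) = true := by
    intro x y h
    have hd : (c.eval (Nat.pair x y)).Dom := (hdom (Nat.pair x y)).2 (by simpa using h)
    obtain ⟨v, hv⟩ := Part.dom_iff_mem.1 hd
    obtain ⟨k, hk⟩ := Nat.Partrec.Code.evaln_complete.1 hv
    exact ⟨k, Option.isSome_iff_exists.2 ⟨v, hk⟩⟩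
  have hout_eq : ∀ (p : ℕ × ℕ) (t : ℕ), outp e p t =
      cond (e p.2.unpair.2.unpair.2 (Nat.pair p.2.unpair.1 p.2.unpair.2.unpair.1))
        ((runL e p.2.unpair.1 p.2.unpair.2.unpair.1 t (p.1 + 1)).map fun l => l.getD p.1 false)
        (some false) := fun _ _ => rfl
  -- monotonicity of outp in the stage bound
  have hout_mono : ∀ (p : ℕ × ℕ) {v : Bool} {t t' : ℕ}, t ≤ t' →
      v ∈ outp e p t → v ∈ outp e p t' := by
    intro p v t t' htt hv
    rw [Option.mem_def] at hv ⊢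
    cases hgate : e p.2.unpair.2.unpair.2 (Nat.pair p.2.unpair.1 p.2.unpair.2.unpair.1) with
    | false => rw [hout_eq, hgate] at hv ⊢; exact hv
    | true =>
      rw [hout_eq, hgate, cond_true, Option.map_eq_some_iff] at hv ⊢
      obtain ⟨l, hl, hvl⟩ := hv
      exact ⟨l, runL_mono htt hl, hvl⟩
  -- totality
  have hdomF : ∀ p : ℕ × ℕ, (Nat.rfindOpt (outp e p)).Dom := by
    intro p
    rw [Nat.rfindOpt_dom]
    cases hgate : e p.2.unpair.2.unpair.2 (Nat.pair p.2.unpair.1 p.2.unpair.2.unpair.1) with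
    | false => exact ⟨0, false, by rw [Option.mem_def, hout_eq, hgate]; rfl⟩
    | true =>
      have hab := hsound _ _ _ hgate
      obtain ⟨t, l, hl⟩ := run_exists hsound hcompl hemono hrefl htrans hab (p.1 + 1)
      exact ⟨t, l.getD p.1 false,
        by rw [Option.mem_def, hout_eq, hgate, cond_true, hl, Option.map_some]⟩
  have hF : Partrec fun p : ℕ × ℕ => Nat.rfindOpt (outp e p) :=
    Partrec.rfindOpt (primrec_outp he).to_comp
  set g : ℕ × ℕ → Bool := fun p => (Nat.rfindOpt (outp e p)).get (hdomF p) with hg_def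
  have hgmem : ∀ p, g p ∈ Nat.rfindOpt (outp e p) := fun p => Part.get_mem _
  have hg : Computable g := hF.of_eq_tot hgmem
  have memA : ∀ p : ℕ × ℕ, g p = true ↔ ∃ t, outp e p t = some true := by
    intro p
    constructor
    · intro h
      obtain ⟨t, ht⟩ := (Nat.rfindOpt_mono (hout_mono p)).1 (hgmem p)
      exact ⟨t, h ▸ ht⟩
    · intro ⟨t, ht⟩
      exact Part.mem_unique (hgmem p) ((Nat.rfindOpt_mono (hout_mono p)).2 ⟨t, ht⟩)
  refine ⟨{p : ℕ × ℕ | g p = true}, ComputablePred.computable_iff.2 ⟨g, hg, rfl⟩, ?_⟩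
  intro i j
  constructor
  · -- P i j → column inclusion
    intro hij n hn
    simp only [Set.mem_setOf_eq] at hn ⊢
    rw [memA] at hn ⊢
    obtain ⟨t, ht⟩ := hn
    cases hgate : e n.unpair.2.unpair.2 (Nat.pair n.unpair.1 n.unpair.2.unpair.1) with
    | false => rw [hout_eq, hgate] at ht; simp at ht
    | true =>
      rw [hout_eq, hgate, cond_true, Option.map_eq_some_iff] at ht
      obtain ⟨l, hl, hvl⟩ := ht
      have hab := hsound _ _ _ hgate
      by_cases hij' : i = j
      · subst hij'
        exact ⟨t, by rw [hout_eq, hgate, cond_true, hl, Option.map_some, hvl]⟩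
      · obtain ⟨t₂, l₂, hl₂⟩ :=
          run_exists hsound hcompl hemono hrefl htrans hab (j + 1)
        cases hvj : l₂.getD j false with
        | true =>
          exact ⟨t₂, by rw [hout_eq, hgate, cond_true, hl₂, Option.map_some, hvj]⟩
        | false =>
          exfalso
          have hilen : i < l.length := by rw [runL_length hl]; exact Nat.lt_succ_self i
          have hjlen : j < l₂.length := by rw [runL_length hl₂]; exact Nat.lt_succ_self j
          have hvi' : l[i]? = some true := getD_getElem?_true hilen hvl
          have hvj' : l₂[j]? = some false := by
            rw [List.getElem?_eq_getElem hjlen]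
            rw [List.getD_eq_getElem _ _ hjlen] at hvj
            rw [hvj]
          exact cross hsound hcompl hemono hrefl htrans hab
            ⟨t, l, hl, hvi'⟩ ⟨t₂, l₂, hl₂, hvj'⟩ hij
  · -- column inclusion → P i j (contrapositive)
    intro hsub
    by_contra hnp
    have hij : j ≠ i := fun h => hnp (h ▸ hrefl j)
    obtain ⟨t₀, ht₀⟩ := hcompl i j hnp
    set n : ℕ := Nat.pair i (Nat.pair j t₀) with hn_def
    have hu1 : n.unpair.1 = i := by simp [hn_def]
    have hu2 : n.unpair.2.unpair.1 = j := by simp [hn_def]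
    have hu3 : n.unpair.2.unpair.2 = t₀ := by simp [hn_def]
    have hgate : e n.unpair.2.unpair.2 (Nat.pair n.unpair.1 n.unpair.2.unpair.1) = true := by
      rw [hu1, hu2, hu3]; exact ht₀
    have hni : (i, n) ∈ {p : ℕ × ℕ | g p = true} := by
      simp only [Set.mem_setOf_eq]
      rw [memA]
      obtain ⟨t, l, hl⟩ := run_exists hsound hcompl hemono hrefl htrans hnp (i + 1)
      have hival : l.getD i false = true := by
        rw [List.getD_eq_getElem?_getD, runL_getElem_a hl (Nat.lt_succ_self i)]; rfl
      refine ⟨t, ?_⟩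
      rw [hout_eq, hgate, cond_true]
      simp only [hu1, hu2]
      rw [hl, Option.map_some, hival]
    have hnj := hsub hni
    simp only [Set.mem_setOf_eq] at hnj
    rw [memA] at hnj
    obtain ⟨t, ht⟩ := hnj
    rw [hout_eq, hgate, cond_true] at ht
    simp only [hu1, hu2] at ht
    rw [Option.map_eq_some_iff] at ht
    obtain ⟨l, hl, hvl⟩ := ht
    have hval : l[j]? = some false := runL_getElem_b hij hl (Nat.lt_succ_self j)
    rw [List.getD_eq_getElem?_getD, hval] at hvl
    simp at hvl


end CEOrders
end

section
/- There exists a co-c.e. partial order ≤_P on ℕ that has no infinite antichain and such that every infinite chain C for ≤_P computes the halting set, i.e., ∅' ≤_T C. -/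
namespace CEOrders

open Nat.Partrec (Code)
open Nat.Partrec.Code

lemma halt_iff (n : ℕ) :
    n ∈ HaltingSet ↔ ∃ k, (evaln k (Denumerable.ofNat Code n) n).isSome := by
  constructor
  · intro h
    obtain ⟨x, hx⟩ := Part.dom_iff_mem.1 h
    obtain ⟨k, hk⟩ := evaln_complete.1 hx
    exact ⟨k, Option.isSome_iff_exists.2 ⟨x, hk⟩⟩
  · rintro ⟨k, hk⟩
    obtain ⟨x, hx⟩ := Option.isSome_iff_exists.1 hk
    exact Part.dom_iff_mem.2 ⟨x, evaln_complete.2 ⟨k, hx⟩⟩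

lemma evaln_isSome_mono {k k' : ℕ} (h : k ≤ k') {c : Code} {n : ℕ}
    (hs : (evaln k c n).isSome) : (evaln k' c n).isSome := by
  obtain ⟨x, hx⟩ := Option.isSome_iff_exists.1 hs
  exact Option.isSome_iff_exists.2 ⟨x, evaln_mono h hx⟩

/-- The partial order: `a ≤ b` iff `a = b`, or `a < b` and the stage-`b`
approximation of the halting set has settled on `[0, a)`. -/
def P (a b : ℕ) : Prop :=
  a = b ∨ (a < b ∧ ∀ n < a, n ∈ HaltingSet →
    (evaln b (Denumerable.ofNat Code n) n).isSome)

theorem RecursiveIn.of_eq {g f h : ℕ →. ℕ} (H : RecursiveIn g f) (e : ∀ n, f n = h n) :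
    RecursiveIn g h := (funext e : f = h) ▸ H

theorem recursiveIn_of_partrec {g f : ℕ →. ℕ} (h : Nat.Partrec f) : RecursiveIn g f := by
  induction h with
  | zero => exact .zero
  | succ => exact .succ
  | left => exact .left
  | right => exact .right
  | pair _ _ ih₁ ih₂ => exact .pair ih₁ ih₂
  | comp _ _ ih₁ ih₂ => exact .comp ih₁ ih₂
  | prec _ _ ih₁ ih₂ => exact .prec ih₁ ih₂
  | rfind _ ih => exact .rfind ih

theorem recursiveIn_of_computable {g : ℕ →. ℕ} {F : ℕ → ℕ} (h : Computable F) :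
    RecursiveIn g ↑F := recursiveIn_of_partrec (Partrec.nat_iff.1 h.partrec)

lemma antichain_finite (C : Set ℕ)
    (h : ∀ a ∈ C, ∀ b ∈ C, a ≠ b → ¬ P a b ∧ ¬ P b a) : C.Finite := by
  by_contra hfin
  have hinf : C.Infinite := hfin
  obtain ⟨a, ha⟩ := hinf.nonempty
  -- a uniform bound s for witnesses below a
  have hw : ∀ n : ℕ, ∃ s : ℕ, n ∈ HaltingSet →
      (evaln s (Denumerable.ofNat Code n) n).isSome := by
    intro n
    by_cases hn : n ∈ HaltingSet
    · obtain ⟨k, hk⟩ := (halt_iff n).1 hn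
      exact ⟨k, fun _ => hk⟩
    · exact ⟨0, fun hh => absurd hh hn⟩
  choose w hwspec using hw
  set s := (Finset.range a).sup w with hs
  obtain ⟨b, hb, hab⟩ := hinf.exists_gt (max a s)
  have hne : a ≠ b := by omega
  have : P a b := by
    refine Or.inr ⟨by omega, fun n hn hH => ?_⟩
    have : w n ≤ s := Finset.le_sup (Finset.mem_range.2 hn)
    exact evaln_isSome_mono (by omega) (hwspec n hH)
  exact (h a ha b hb hne).1 this


lemma P_po : PartialOrderRel P := by
  refine ⟨fun a => Or.inl rfl, ?_, ?_⟩
  · rintro a b (rfl | ⟨h, _⟩) hba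
    · rfl
    · rcases hba with rfl | ⟨h', _⟩
      · rfl
      · omega
  · rintro a b c (rfl | ⟨hab, sab⟩) hbc
    · exact hbc
    · rcases hbc with rfl | ⟨hbc, sbc⟩
      · exact Or.inr ⟨hab, sab⟩
      · exact Or.inr ⟨hab.trans hbc, fun n hn hH => sbc n (hn.trans hab) hH⟩

def Q (p m : ℕ) : Bool :=
  decide (p.unpair.1 ≠ p.unpair.2) &&
  (decide (p.unpair.2 ≤ p.unpair.1) ||
   (decide (m.unpair.1 < p.unpair.1) &&
    (evaln m.unpair.2 (Denumerable.ofNat Code m.unpair.1) m.unpair.1).isSome &&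
    !(evaln p.unpair.2 (Denumerable.ofNat Code m.unpair.1) m.unpair.1).isSome))


lemma Qprim : Primrec₂ Q := by
  have hu : Primrec Nat.unpair := Primrec.unpair
  have a1 : Primrec fun x : ℕ × ℕ => x.1.unpair.1 :=
    Primrec.fst.comp (hu.comp Primrec.fst)
  have a2 : Primrec fun x : ℕ × ℕ => x.1.unpair.2 :=
    Primrec.snd.comp (hu.comp Primrec.fst)
  have b1 : Primrec fun x : ℕ × ℕ => x.2.unpair.1 :=
    Primrec.fst.comp (hu.comp Primrec.snd)
  have b2 : Primrec fun x : ℕ × ℕ => x.2.unpair.2 :=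
    Primrec.snd.comp (hu.comp Primrec.snd)
  have hev : Primrec fun q : ℕ × ℕ => evaln q.1 (Denumerable.ofNat Code q.2) q.2 :=
    primrec_evaln.comp
      ((Primrec.fst.pair ((Primrec.ofNat Code).comp Primrec.snd)).pair Primrec.snd)
  have e1 : Primrec fun x : ℕ × ℕ =>
      (evaln x.2.unpair.2 (Denumerable.ofNat Code x.2.unpair.1) x.2.unpair.1).isSome :=
    Primrec.option_isSome.comp (hev.comp (b2.pair b1))
  have e2 : Primrec fun x : ℕ × ℕ =>
      (evaln x.1.unpair.2 (Denumerable.ofNat Code x.2.unpair.1) x.2.unpair.1).isSome :=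
    Primrec.option_isSome.comp (hev.comp (a2.pair b1))
  have d1 : Primrec fun x : ℕ × ℕ => decide (x.1.unpair.1 ≠ x.1.unpair.2) := by
    have : Primrec fun x : ℕ × ℕ => decide (x.1.unpair.1 = x.1.unpair.2) :=
      (Primrec.eq.comp a1 a2).decide
    exact (Primrec.not.comp this).of_eq fun x => by simp
  have d2 : Primrec fun x : ℕ × ℕ => decide (x.1.unpair.2 ≤ x.1.unpair.1) :=
    (Primrec.nat_le.comp a2 a1).decide
  have d3 : Primrec fun x : ℕ × ℕ => decide (x.2.unpair.1 < x.1.unpair.1) :=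
    (Primrec.nat_lt.comp b1 a1).decide
  exact (Primrec.and.comp d1
    (Primrec.or.comp d2
      (Primrec.and.comp (Primrec.and.comp d3 e1) (Primrec.not.comp e2))))

lemma key (p : ℕ) : p ∉ codedSet P ↔ ∃ m, Q p m = true := by
  set a := p.unpair.1
  set b := p.unpair.2
  have hmem : p ∈ codedSet P ↔ P a b := Iff.rfl
  constructor
  · intro hnp
    rw [hmem] at hnp
    unfold P at hnp
    push_neg at hnp
    obtain ⟨hne, hrest⟩ := hnp
    by_cases hab : a < b
    · obtain ⟨n, hn, hH, hnot⟩ := hrest hab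
      obtain ⟨k, hk⟩ := (halt_iff n).1 hH
      refine ⟨Nat.pair n k, ?_⟩
      unfold Q
      simp only [Nat.unpair_pair]
      simp [hne, hn, hk, hnot]
      exact ⟨hne, Or.inr ⟨hn, Option.not_isSome_iff_eq_none.1 hnot⟩⟩
    · refine ⟨0, ?_⟩
      unfold Q
      simp [hne, Nat.not_lt.1 hab]
      exact ⟨hne, Or.inl (Nat.not_lt.1 hab)⟩
  · rintro ⟨m, hm⟩
    rw [hmem]
    unfold Q at hm
    simp only [Bool.and_eq_true, Bool.or_eq_true, decide_eq_true_eq, Bool.not_eq_true',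
      Bool.and_eq_true] at hm
    obtain ⟨hne, hcase⟩ := hm
    rintro (heq | ⟨hab, hset⟩)
    · exact hne heq
    · rcases hcase with hba | ⟨⟨hn, hev⟩, hnot⟩
      · omega
      · have hH : m.unpair.1 ∈ HaltingSet := (halt_iff _).2 ⟨m.unpair.2, hev⟩
        have := hset m.unpair.1 hn hH
        rw [hnot] at this
        exact absurd this (by simp)

lemma coce : SetCoCE (codedSet P) := by
  have hf : Partrec fun p : ℕ => Nat.rfind fun m => Part.some (Q p m) := by
    apply Partrec.rfind
    exact (Qprim.to_comp).partrec₂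
  have hre : REPred fun p : ℕ => (Nat.rfind fun m => Part.some (Q p m)).Dom :=
    hf.dom_re
  have : (fun p : ℕ => p ∉ codedSet P) =
      fun p => (Nat.rfind fun m => Part.some (Q p m)).Dom := by
    funext p
    apply propext
    rw [key p, Nat.rfind_dom (p := fun m => Part.some (Q p m))]
    constructor
    · rintro ⟨m, hm⟩
      exact ⟨m, by simp [hm], fun _ => trivial⟩
    · rintro ⟨m, hm, _⟩
      refine ⟨m, ?_⟩
      simpa using hm
  unfold SetCoCE
  rw [show (fun p => p ∉ codedSet P) = (· ∉ codedSet P) from rfl] at this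
  rw [this]
  exact hre

def evalnBit (b n : ℕ) : ℕ :=
  if (evaln b (Denumerable.ofNat Code n) n).isSome then 1 else 0

def finFun (m : ℕ) : ℕ := evalnBit m.unpair.2.unpair.2 m.unpair.1

def GFun (m : ℕ) : ℕ :=
  if m.unpair.1.unpair.1 < m.unpair.1.unpair.2.unpair.1 ∧
     m.unpair.1.unpair.2.unpair.1 < m.unpair.1.unpair.2.unpair.2 ∧
     m.unpair.2.unpair.1 = 1 ∧ m.unpair.2.unpair.2 = 1 then 0 else 1


lemma finFun_prim : Computable finFun := by
  have hu : Primrec Nat.unpair := Primrec.unpair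
  have hn : Primrec fun m : ℕ => m.unpair.1 := Primrec.fst.comp hu
  have hb : Primrec fun m : ℕ => m.unpair.2.unpair.2 :=
    Primrec.snd.comp (hu.comp (Primrec.snd.comp hu))
  have hev : Primrec fun m : ℕ =>
      (evaln m.unpair.2.unpair.2 (Denumerable.ofNat Code m.unpair.1) m.unpair.1).isSome :=
    Primrec.option_isSome.comp
      (primrec_evaln.comp ((hb.pair ((Primrec.ofNat Code).comp hn)).pair hn))
  have hp : PrimrecPred fun m : ℕ =>
      (evaln m.unpair.2.unpair.2 (Denumerable.ofNat Code m.unpair.1) m.unpair.1).isSome = true :=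
    primrecPred_iff_primrec_decide.2 (hev.of_eq fun a => by simp)
  exact (Primrec.ite hp (Primrec.const 1) (Primrec.const 0)).to_comp.of_eq fun m => by
    simp [finFun, evalnBit]

lemma GFun_prim : Computable GFun := by
  have hu : Primrec Nat.unpair := Primrec.unpair
  have h11 : Primrec fun m : ℕ => m.unpair.1.unpair.1 :=
    Primrec.fst.comp (hu.comp (Primrec.fst.comp hu))
  have h121 : Primrec fun m : ℕ => m.unpair.1.unpair.2.unpair.1 :=
    Primrec.fst.comp (hu.comp (Primrec.snd.comp (hu.comp (Primrec.fst.comp hu))))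
  have h122 : Primrec fun m : ℕ => m.unpair.1.unpair.2.unpair.2 :=
    Primrec.snd.comp (hu.comp (Primrec.snd.comp (hu.comp (Primrec.fst.comp hu))))
  have h21 : Primrec fun m : ℕ => m.unpair.2.unpair.1 :=
    Primrec.fst.comp (hu.comp (Primrec.snd.comp hu))
  have h22 : Primrec fun m : ℕ => m.unpair.2.unpair.2 :=
    Primrec.snd.comp (hu.comp (Primrec.snd.comp hu))
  have hp : PrimrecPred fun m : ℕ =>
      m.unpair.1.unpair.1 < m.unpair.1.unpair.2.unpair.1 ∧
      m.unpair.1.unpair.2.unpair.1 < m.unpair.1.unpair.2.unpair.2 ∧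
      m.unpair.2.unpair.1 = 1 ∧ m.unpair.2.unpair.2 = 1 :=
    (Primrec.nat_lt.comp h11 h121).and
      ((Primrec.nat_lt.comp h121 h122).and
        ((Primrec.eq.comp h21 (Primrec.const 1)).and
          (Primrec.eq.comp h22 (Primrec.const 1))))
  exact (Primrec.ite hp (Primrec.const 0) (Primrec.const 1)).to_comp

open Classical in
noncomputable def cb (C : Set ℕ) (x : ℕ) : ℕ := if x ∈ C then 1 else 0

theorem chain_computes (C : Set ℕ) (hch : ChainFor P C) (hinf : C.Infinite) :
    RecursiveIn (charFun C) (charFun HaltingSet) := by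
  set χ := charFun C with hχ
  have he₁ : Computable fun m : ℕ => m.unpair.2.unpair.1 :=
    (Primrec.fst.comp (Primrec.unpair.comp (Primrec.snd.comp Primrec.unpair))).to_comp
  have he₂ : Computable fun m : ℕ => m.unpair.2.unpair.2 :=
    (Primrec.snd.comp (Primrec.unpair.comp (Primrec.snd.comp Primrec.unpair))).to_comp
  have h₁ : RecursiveIn χ fun m : ℕ => χ m.unpair.2.unpair.1 :=
    (RecursiveIn.comp .oracle (recursiveIn_of_computable he₁)).of_eq fun m => by
      simp [PFun.coe_val]
      exact Part.bind_some _ _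
  have h₂ : RecursiveIn χ fun m : ℕ => χ m.unpair.2.unpair.2 :=
    (RecursiveIn.comp .oracle (recursiveIn_of_computable he₂)).of_eq fun m => by
      simp [PFun.coe_val]
      exact Part.bind_some _ _
  have hid : RecursiveIn χ ↑(fun x : ℕ => x) := recursiveIn_of_computable Computable.id
  set W2 : ℕ →. ℕ := fun m : ℕ => Nat.pair <$> (↑(fun x : ℕ => x) : ℕ →. ℕ) m <*>
      (Nat.pair <$> χ m.unpair.2.unpair.1 <*> χ m.unpair.2.unpair.2) with hW2
  have hw2 : RecursiveIn χ W2 := RecursiveIn.pair hid (RecursiveIn.pair h₁ h₂)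
  have ht : RecursiveIn χ fun m => W2 m >>= (GFun : ℕ →. ℕ) :=
    RecursiveIn.comp (recursiveIn_of_computable GFun_prim) hw2
  have hr : RecursiveIn χ fun n =>
      Nat.rfind fun k => (fun m => m = 0) <$> (fun m => W2 m >>= (GFun : ℕ →. ℕ)) (Nat.pair n k) :=
    RecursiveIn.rfind ht
  have hr2 : RecursiveIn χ fun n => Nat.pair <$> (↑(fun x : ℕ => x) : ℕ →. ℕ) n <*>
      (Nat.rfind fun k => (fun m => m = 0) <$> (fun m => W2 m >>= (GFun : ℕ →. ℕ)) (Nat.pair n k)) :=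
    RecursiveIn.pair hid hr
  have hF : RecursiveIn χ fun n =>
      (Nat.pair <$> (↑(fun x : ℕ => x) : ℕ →. ℕ) n <*>
        (Nat.rfind fun k => (fun m => m = 0) <$> (fun m => W2 m >>= (GFun : ℕ →. ℕ)) (Nat.pair n k)))
        >>= (finFun : ℕ →. ℕ) :=
    RecursiveIn.comp (recursiveIn_of_computable finFun_prim) hr2
  -- pointwise evaluation
  have hW2val : ∀ m : ℕ, W2 m = Part.some
      (Nat.pair m (Nat.pair (cb C m.unpair.2.unpair.1) (cb C m.unpair.2.unpair.2))) := by
    intro m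
    simp [hW2, hχ, charFun, cb, Seq.seq]
  have htval : ∀ m : ℕ, (W2 m >>= (GFun : ℕ →. ℕ)) = Part.some
      (GFun (Nat.pair m (Nat.pair (cb C m.unpair.2.unpair.1) (cb C m.unpair.2.unpair.2)))) := by
    intro m
    rw [hW2val m]
    exact Part.bind_some _ _
  have hcb1 : ∀ x ∈ C, cb C x = 1 := fun x hx => by simp [cb, hx]
  have hcb1' : ∀ x : ℕ, cb C x = 1 → x ∈ C := by
    intro x hx
    by_contra h
    simp [cb, h] at hx
  refine hF.of_eq fun n => ?_
  set p : ℕ →. Bool := fun k =>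
    (fun m => m = 0) <$> (fun m => W2 m >>= (GFun : ℕ →. ℕ)) (Nat.pair n k) with hp
  have hpval : ∀ k : ℕ, p k = Part.some (decide
      (GFun (Nat.pair (Nat.pair n k)
        (Nat.pair (cb C ((Nat.unpair k).1)) (cb C ((Nat.unpair k).2)))) = 0)) := by
    intro k
    simp only [hp]
    rw [htval (Nat.pair n k)]
    simp [Nat.unpair_pair]
  -- existence of a witness
  obtain ⟨a, haC, hna⟩ := hinf.exists_gt n
  obtain ⟨b, hbC, hab⟩ := hinf.exists_gt a
  have hwit : GFun (Nat.pair (Nat.pair n (Nat.pair a b))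
      (Nat.pair (cb C a) (cb C b))) = 0 := by
    simp [GFun, Nat.unpair_pair, hna, hab, hcb1 a haC, hcb1 b hbC]
  have hdom : (Nat.rfind p).Dom := by
    rw [Nat.rfind_dom]
    refine ⟨Nat.pair a b, ?_, fun {m} _ => ?_⟩
    · rw [hpval (Nat.pair a b)]
      simp [Nat.unpair_pair, hwit]
    · rw [hpval m]; trivial
  set k₀ := (Nat.rfind p).get hdom with hk₀
  have hk₀mem : k₀ ∈ Nat.rfind p := Part.get_mem hdom
  have hspec : true ∈ p k₀ := Nat.rfind_spec hk₀mem
  rw [hpval k₀] at hspec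
  have hT0 : GFun (Nat.pair (Nat.pair n k₀)
      (Nat.pair (cb C ((Nat.unpair k₀).1)) (cb C ((Nat.unpair k₀).2)))) = 0 := by
    simpa using hspec
  set a' := (Nat.unpair k₀).1
  set b' := (Nat.unpair k₀).2
  have hcond : n < a' ∧ a' < b' ∧ cb C a' = 1 ∧ cb C b' = 1 := by
    by_contra hc
    rw [GFun] at hT0
    rw [if_neg] at hT0
    · exact absurd hT0 one_ne_zero
    · simpa [Nat.unpair_pair] using hc
  obtain ⟨hna', ha'b', hca', hcb'⟩ := hcond
  have ha'C : a' ∈ C := hcb1' _ hca'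
  have hb'C : b' ∈ C := hcb1' _ hcb'
  have hPab : P a' b' := by
    rcases hch a' ha'C b' hb'C with h | h
    · exact h
    · rcases h with heq | ⟨hlt, _⟩ <;> omega
  have hset : ∀ m < a', m ∈ HaltingSet →
      (evaln b' (Denumerable.ofNat Code m) m).isSome := by
    rcases hPab with heq | ⟨_, hs⟩
    · omega
    · exact hs
  have hbit : evalnBit b' n = cb HaltingSet n := by
    by_cases hH : n ∈ HaltingSet
    · simp [evalnBit, cb, hset n hna' hH, hH]
    · have hns : ¬ (evaln b' (Denumerable.ofNat Code n) n).isSome = true := by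
        intro h
        obtain ⟨x, hx⟩ := Option.isSome_iff_exists.1 h
        exact hH (Part.dom_iff_mem.2 ⟨x, evaln_sound hx⟩)
      simp [evalnBit, cb, hns, hH]
  have hrfind : Nat.rfind p = Part.some k₀ := Part.eq_some_iff.2 hk₀mem
  calc (Nat.pair <$> (↑(fun x : ℕ => x) : ℕ →. ℕ) n <*> Nat.rfind p) >>= (finFun : ℕ →. ℕ)
      = Part.some (finFun (Nat.pair n k₀)) := by
        rw [hrfind]; simp [Seq.seq, PFun.coe_val]
        exact Part.bind_some _ _
    _ = charFun HaltingSet n := by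
        simp only [finFun, Nat.unpair_pair]
        rw [hbit]
        simp [charFun, cb]


theorem exists_coCE_partialOrder_no_infinite_antichain_chains_compute_haltingSet :
    ∃ P : ℕ → ℕ → Prop, PartialOrderRel P ∧ SetCoCE (codedSet P) ∧
      (∀ C : Set ℕ, AntichainFor P C → C.Finite) ∧
      (∀ C : Set ℕ, ChainFor P C → C.Infinite → TuringLE HaltingSet C) := by
  refine ⟨P, P_po, coce, fun C hC => antichain_finite C hC, fun C hch hinf => ?_⟩
  exact chain_computes C hch hinf

end CEOrders
end
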